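/- arXiv:2307.03540 — 6 statements merged into one kernel-verified Lean document; each statement's English description precedes it below -/
import Mathlib

section
/- In a dual weak brace S, a full inverse subsemigroup I of (S,+) is a left ideal of S if and only if a · x ∈ I for all a ∈ S and x ∈ I, where a · x := -a + a ∘ x - x. -/
/-- A weak brace: `(S,+)` and `(S,∘)` are inverse semigroups satisfying
`a ∘ (b + c) = a ∘ b - a + a ∘ c` and `a ∘ a⁻ = -a + a`. -/
class WeakBrace (S : Type*) where
  add : S → S → S
  mul : S → S → S
  neg : S → S
  inv : S → S
  add_assoc : ∀ a b c : S, add (add a b) c = add a (add b c)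
  mul_assoc : ∀ a b c : S, mul (mul a b) c = mul a (mul b c)
  add_reg : ∀ a : S, add (add a (neg a)) a = a
  neg_reg : ∀ a : S, add (add (neg a) a) (neg a) = neg a
  neg_unique : ∀ a x : S, add (add a x) a = a → add (add x a) x = x → x = neg a
  mul_reg : ∀ a : S, mul (mul a (inv a)) a = a
  inv_reg : ∀ a : S, mul (mul (inv a) a) (inv a) = inv a
  inv_unique : ∀ a x : S, mul (mul a x) a = a → mul (mul x a) x = x → x = inv a
  distrib : ∀ a b c : S, mul a (add b c) = add (add (mul a b) (neg a)) (mul a c)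
  link : ∀ a : S, mul a (inv a) = add (neg a) a

/-- A dual weak brace: a weak brace whose multiplicative semigroup is Clifford. -/
class DualWeakBrace (S : Type*) extends WeakBrace S where
  clifford : ∀ a : S, WeakBrace.mul a (WeakBrace.inv a) = WeakBrace.mul (WeakBrace.inv a) a

namespace WeakBrace

variable {S : Type*} [WeakBrace S]

/-- `λ_a(b) = -a + a ∘ b`. -/
def lam (a b : S) : S := add (neg a) (mul a b)

/-- `ρ_b(a) = (-a + a ∘ b)⁻ ∘ a ∘ b`. -/
def rho (b a : S) : S := mul (mul (inv (lam a b)) a) b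

/-- `a · b = -a + a ∘ b - b`. -/
def cdot (a b : S) : S := add (add (neg a) (mul a b)) (neg b)

/-- `a⁰ = a - a`. -/
def sq (a : S) : S := add a (neg a)

/-- Additive idempotent (the sets of idempotents of `+` and `∘` coincide). -/
def IsIdem (e : S) : Prop := add e e = e

/-- `[a,b]₊ = -a - b + a + b`. -/
def brkt (a b : S) : S := add (add (add (neg a) (neg b)) a) b

/-- `I` is a full inverse subsemigroup of `(S,+)`. -/
def IsFullAddSub (I : Set S) : Prop :=
  (∀ e : S, IsIdem e → e ∈ I) ∧ (∀ x ∈ I, ∀ y ∈ I, add x y ∈ I) ∧ (∀ x ∈ I, neg x ∈ I)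

/-- `I` is a normal subsemigroup of `(S,+)`. -/
def IsNormalAdd (I : Set S) : Prop :=
  IsFullAddSub I ∧ ∀ a : S, ∀ x ∈ I, add (add (neg a) x) a ∈ I

/-- `I` is a normal subsemigroup of `(S,∘)`. -/
def IsNormalMul (I : Set S) : Prop :=
  (∀ e : S, IsIdem e → e ∈ I) ∧ (∀ x ∈ I, ∀ y ∈ I, mul x y ∈ I) ∧ (∀ x ∈ I, inv x ∈ I) ∧
    ∀ a : S, ∀ x ∈ I, mul (mul (inv a) x) a ∈ I

/-- `I` is a left ideal of the weak brace `S`. -/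
def IsLeftIdeal (I : Set S) : Prop :=
  IsFullAddSub I ∧ ∀ a : S, ∀ x ∈ I, lam a x ∈ I

/-- `I` is an ideal of the weak brace `S`. -/
def IsIdeal (I : Set S) : Prop :=
  IsNormalAdd I ∧ (∀ a : S, ∀ x ∈ I, lam a x ∈ I) ∧ IsNormalMul I

/-- The socle `Soc(S)`. -/
def Soc (S : Type*) [WeakBrace S] : Set S :=
  {a | ∀ b : S, add a b = mul a b ∧ add a b = add b a}

/-- The annihilator `Ann(S)`. -/
def Ann (S : Type*) [WeakBrace S] : Set S :=
  {a | ∀ b : S, add a b = add b a ∧ add a b = mul a b ∧ mul a b = mul b a}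

/-- The congruence `a ∼_I b ⟺ a⁰ = b⁰ and -a + b ∈ I` associated to an ideal `I`. -/
def simI (I : Set S) (a b : S) : Prop := sq a = sq b ∧ add (neg a) b ∈ I

/-- Membership in the inverse subsemigroup of `(S,+)` generated by a set `X`. -/
inductive genAdd (X : Set S) : S → Prop
  | base : ∀ x ∈ X, genAdd X x
  | add : ∀ a b : S, genAdd X a → genAdd X b → genAdd X (add a b)
  | neg : ∀ a : S, genAdd X a → genAdd X (neg a)

/-- `X · Y`: the additive inverse subsemigroup generated by the elements `x · y`. -/
def cdotSet (X Y : Set S) : Set S :=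
  {s | genAdd {z | ∃ x ∈ X, ∃ y ∈ Y, z = cdot x y} s}

/-- `S^(n)` for `n ≥ 1`: `S^(1) = S`, `S^(n+1) = S^(n) · S`. -/
def Spow (S : Type*) [WeakBrace S] : ℕ → Set S
  | 0 => Set.univ
  | 1 => Set.univ
  | (n+2) => cdotSet (Spow S (n+1)) Set.univ

end WeakBrace

namespace WBAux
open WeakBrace

local infixl:65 " +ᵂ " => WeakBrace.add
local infixl:70 " ∗ᵂ " => WeakBrace.mul

variable {S : Type*} [WeakBrace S]

lemma aA (a b c : S) : a +ᵂ b +ᵂ c = a +ᵂ (b +ᵂ c) := add_assoc a b c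
lemma mA (a b c : S) : a ∗ᵂ b ∗ᵂ c = a ∗ᵂ (b ∗ᵂ c) := mul_assoc a b c

lemma aNN (a : S) : neg (neg a) = a := (neg_unique (neg a) a (neg_reg a) (add_reg a)).symm

lemma aIdemNeg (e : S) (h : e +ᵂ e = e) : neg e = e :=
  (neg_unique e e (by rw [h, h]) (by rw [h, h])).symm

lemma aCol (e : S) (h : e +ᵂ e = e) (x : S) : e +ᵂ (e +ᵂ x) = e +ᵂ x := by
  rw [← aA, h]

/-- `add_reg` with a tail. -/
lemma aRegT (a x : S) : a +ᵂ (neg a +ᵂ (a +ᵂ x)) = a +ᵂ x := by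
  have := congrArg (fun t => t +ᵂ x) (add_reg a)
  simp only [aA] at this
  exact this

/-- `neg_reg` with a tail. -/
lemma aNRegT (a x : S) : neg a +ᵂ (a +ᵂ (neg a +ᵂ x)) = neg a +ᵂ x := by
  have := congrArg (fun t => t +ᵂ x) (neg_reg a)
  simp only [aA] at this
  exact this

lemma aSumIdem (e f : S) (he : e +ᵂ e = e) (hf : f +ᵂ f = f) :
    (e +ᵂ f) +ᵂ (e +ᵂ f) = e +ᵂ f := by
  set u := neg (e +ᵂ f) with hu_def
  have hu : f +ᵂ (u +ᵂ e) = u := by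
    apply neg_unique (e +ᵂ f)
    · -- ((e+ᵂf) +ᵂ (f+ᵂ(u+ᵂe))) +ᵂ (e+ᵂf) = e+ᵂf
      have h1 := add_reg (e +ᵂ f)
      simp only [aA] at h1 ⊢
      rw [aCol f hf, aCol e he]
      exact h1
    · have h2 := neg_reg (e +ᵂ f)
      simp only [aA] at h2 ⊢
      rw [aCol e he, aCol f hf]
      -- goal: f +ᵂ (u +ᵂ (e +ᵂ (f +ᵂ (u +ᵂ e)))) = f +ᵂ (u +ᵂ e)
      have h3 : ∀ x : S, u +ᵂ (e +ᵂ (f +ᵂ (u +ᵂ x))) = u +ᵂ x := by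
        intro x
        have := congrArg (fun t => t +ᵂ x) (neg_reg (e +ᵂ f))
        simp only [aA] at this
        exact this
      rw [h3 e]
  have huu : u +ᵂ u = u := by
    have h3 : ∀ x : S, u +ᵂ (e +ᵂ (f +ᵂ (u +ᵂ x))) = u +ᵂ x := by
      intro x
      have := congrArg (fun t => t +ᵂ x) (neg_reg (e +ᵂ f))
      simp only [aA] at this
      exact this
    calc u +ᵂ u = (f +ᵂ (u +ᵂ e)) +ᵂ (f +ᵂ (u +ᵂ e)) := by rw [hu]
      _ = f +ᵂ (u +ᵂ (e +ᵂ (f +ᵂ (u +ᵂ e)))) := by simp only [aA]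
      _ = f +ᵂ (u +ᵂ e) := by rw [h3 e]
      _ = u := hu
  have : e +ᵂ f = u := by
    have h4 : neg u = u := aIdemNeg u huu
    have h5 : neg u = e +ᵂ f := by rw [hu_def, aNN]
    rw [← h5, h4]
  rw [this]; exact huu

lemma aComm (e f : S) (he : e +ᵂ e = e) (hf : f +ᵂ f = f) : e +ᵂ f = f +ᵂ e := by
  have hs := aSumIdem e f he hf
  have ht := aSumIdem f e hf he
  have key : f +ᵂ e = neg (e +ᵂ f) := by
    apply neg_unique (e +ᵂ f)
    · simp only [aA]
      rw [aCol f hf, aCol e he]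
      simp only [aA] at hs
      exact hs
    · simp only [aA]
      rw [aCol e he, aCol f hf]
      simp only [aA] at ht
      exact ht
  rw [key, aIdemNeg (e +ᵂ f) hs]

/- multiplicative mirrors -/

lemma mNN (a : S) : inv (inv a) = a := (inv_unique (inv a) a (inv_reg a) (mul_reg a)).symm

lemma mIdemInv (e : S) (h : e ∗ᵂ e = e) : inv e = e :=
  (inv_unique e e (by rw [h, h]) (by rw [h, h])).symm

lemma mCol (e : S) (h : e ∗ᵂ e = e) (x : S) : e ∗ᵂ (e ∗ᵂ x) = e ∗ᵂ x := by
  rw [← mA, h]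

lemma mSumIdem (e f : S) (he : e ∗ᵂ e = e) (hf : f ∗ᵂ f = f) :
    (e ∗ᵂ f) ∗ᵂ (e ∗ᵂ f) = e ∗ᵂ f := by
  set u := inv (e ∗ᵂ f) with hu_def
  have hu : f ∗ᵂ (u ∗ᵂ e) = u := by
    apply inv_unique (e ∗ᵂ f)
    · have h1 := mul_reg (e ∗ᵂ f)
      simp only [mA] at h1 ⊢
      rw [mCol f hf, mCol e he]
      exact h1
    · have h2 := inv_reg (e ∗ᵂ f)
      simp only [mA] at h2 ⊢
      rw [mCol e he, mCol f hf]
      have h3 : ∀ x : S, u ∗ᵂ (e ∗ᵂ (f ∗ᵂ (u ∗ᵂ x))) = u ∗ᵂ x := by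
        intro x
        have := congrArg (fun t => t ∗ᵂ x) (inv_reg (e ∗ᵂ f))
        simp only [mA] at this
        exact this
      rw [h3 e]
  have huu : u ∗ᵂ u = u := by
    have h3 : ∀ x : S, u ∗ᵂ (e ∗ᵂ (f ∗ᵂ (u ∗ᵂ x))) = u ∗ᵂ x := by
      intro x
      have := congrArg (fun t => t ∗ᵂ x) (inv_reg (e ∗ᵂ f))
      simp only [mA] at this
      exact this
    calc u ∗ᵂ u = (f ∗ᵂ (u ∗ᵂ e)) ∗ᵂ (f ∗ᵂ (u ∗ᵂ e)) := by rw [hu]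
      _ = f ∗ᵂ (u ∗ᵂ (e ∗ᵂ (f ∗ᵂ (u ∗ᵂ e)))) := by simp only [mA]
      _ = f ∗ᵂ (u ∗ᵂ e) := by rw [h3 e]
      _ = u := hu
  have : e ∗ᵂ f = u := by
    have h4 : inv u = u := mIdemInv u huu
    have h5 : inv u = e ∗ᵂ f := by rw [hu_def, mNN]
    rw [← h5, h4]
  rw [this]; exact huu

lemma mComm (e f : S) (he : e ∗ᵂ e = e) (hf : f ∗ᵂ f = f) : e ∗ᵂ f = f ∗ᵂ e := by
  have hs := mSumIdem e f he hf
  have ht := mSumIdem f e hf he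
  have key : f ∗ᵂ e = inv (e ∗ᵂ f) := by
    apply inv_unique (e ∗ᵂ f)
    · simp only [mA]
      rw [mCol f hf, mCol e he]
      simp only [mA] at hs
      exact hs
    · simp only [mA]
      rw [mCol e he, mCol f hf]
      simp only [mA] at ht
      exact ht
  rw [key, mIdemInv (e ∗ᵂ f) hs]

/-- a multiplicative idempotent is an additive idempotent -/
lemma mIdemAdd (f : S) (h : f ∗ᵂ f = f) : f +ᵂ f = f := by
  have h1 : neg f +ᵂ f = f := by
    have := link f
    rw [mIdemInv f h, h] at this
    exact this.symm
  calc f +ᵂ f = f +ᵂ (neg f +ᵂ f) := by rw [h1]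
    _ = f +ᵂ neg f +ᵂ f := (aA ..).symm
    _ = f := add_reg f

lemma mIdemNegA (f : S) (h : f ∗ᵂ f = f) : neg f = f := aIdemNeg f (mIdemAdd f h)

end WBAux

namespace WBAux
open WeakBrace
local infixl:65 " +ᵂ " => WeakBrace.add
local infixl:70 " ∗ᵂ " => WeakBrace.mul
variable {S : Type*} [DualWeakBrace S]

/-- the key absorption identity: `a∘b + (-b + b) = a∘b`. -/
lemma keyAbs (a b : S) : (a ∗ᵂ b) +ᵂ (neg b +ᵂ b) = a ∗ᵂ b := by
  have hg_idem : (inv b ∗ᵂ b) ∗ᵂ (inv b ∗ᵂ b) = inv b ∗ᵂ b := by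
    have h := congrArg (fun t => t ∗ᵂ b) (inv_reg b)
    simp only [mA] at h
    calc (inv b ∗ᵂ b) ∗ᵂ (inv b ∗ᵂ b) = inv b ∗ᵂ (b ∗ᵂ (inv b ∗ᵂ b)) := by simp only [mA]
      _ = inv b ∗ᵂ b := h
  have hg_eq : inv b ∗ᵂ b = neg b +ᵂ b := by
    rw [← DualWeakBrace.clifford b, link b]
  have hcg : (a ∗ᵂ b) ∗ᵂ (inv b ∗ᵂ b) = a ∗ᵂ b := by
    have h := congrArg (fun t => a ∗ᵂ t) (mul_reg b)
    simp only [mA] at h ⊢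
    exact h
  have hf_idem : (inv (a ∗ᵂ b) ∗ᵂ (a ∗ᵂ b)) ∗ᵂ (inv (a ∗ᵂ b) ∗ᵂ (a ∗ᵂ b))
      = inv (a ∗ᵂ b) ∗ᵂ (a ∗ᵂ b) := by
    have h := congrArg (fun t => t ∗ᵂ (a ∗ᵂ b)) (inv_reg (a ∗ᵂ b))
    simp only [mA] at h ⊢
    exact h
  have hfg : (inv (a ∗ᵂ b) ∗ᵂ (a ∗ᵂ b)) ∗ᵂ (inv b ∗ᵂ b) = inv (a ∗ᵂ b) ∗ᵂ (a ∗ᵂ b) := by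
    rw [mA, hcg]
  have hgf : (inv b ∗ᵂ b) ∗ᵂ (inv (a ∗ᵂ b) ∗ᵂ (a ∗ᵂ b)) = inv (a ∗ᵂ b) ∗ᵂ (a ∗ᵂ b) := by
    rw [mComm _ _ hg_idem hf_idem, hfg]
  have hf_eq : inv (a ∗ᵂ b) ∗ᵂ (a ∗ᵂ b) = neg (a ∗ᵂ b) +ᵂ (a ∗ᵂ b) := by
    rw [← DualWeakBrace.clifford (a ∗ᵂ b), link (a ∗ᵂ b)]
  have hfA : (inv (a ∗ᵂ b) ∗ᵂ (a ∗ᵂ b)) +ᵂ (inv (a ∗ᵂ b) ∗ᵂ (a ∗ᵂ b))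
      = inv (a ∗ᵂ b) ∗ᵂ (a ∗ᵂ b) := mIdemAdd _ hf_idem
  have hgA : (inv b ∗ᵂ b) +ᵂ (inv b ∗ᵂ b) = inv b ∗ᵂ b := mIdemAdd _ hg_idem
  have hnegg : neg (inv b ∗ᵂ b) = inv b ∗ᵂ b := mIdemNegA _ hg_idem
  have hd := distrib (inv b ∗ᵂ b) (inv (a ∗ᵂ b) ∗ᵂ (a ∗ᵂ b)) (inv (a ∗ᵂ b) ∗ᵂ (a ∗ᵂ b))
  rw [hfA, hgf, hnegg] at hd
  -- hd : f = (f + g) + f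
  have hfg_add : (inv (a ∗ᵂ b) ∗ᵂ (a ∗ᵂ b)) +ᵂ (inv b ∗ᵂ b) = inv (a ∗ᵂ b) ∗ᵂ (a ∗ᵂ b) := by
    have h1 : (inv (a ∗ᵂ b) ∗ᵂ (a ∗ᵂ b)) +ᵂ (inv b ∗ᵂ b) +ᵂ (inv (a ∗ᵂ b) ∗ᵂ (a ∗ᵂ b))
        = (inv (a ∗ᵂ b) ∗ᵂ (a ∗ᵂ b)) +ᵂ (inv b ∗ᵂ b) := by
      rw [aA, aComm _ _ hgA hfA, ← aA, hfA]
    rw [h1] at hd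
    exact hd.symm
  have hcf : (a ∗ᵂ b) +ᵂ (inv (a ∗ᵂ b) ∗ᵂ (a ∗ᵂ b)) = a ∗ᵂ b := by
    rw [hf_eq, ← aA]
    exact add_reg (a ∗ᵂ b)
  calc (a ∗ᵂ b) +ᵂ (neg b +ᵂ b) = (a ∗ᵂ b) +ᵂ (inv b ∗ᵂ b) := by rw [hg_eq]
    _ = ((a ∗ᵂ b) +ᵂ (inv (a ∗ᵂ b) ∗ᵂ (a ∗ᵂ b))) +ᵂ (inv b ∗ᵂ b) := by rw [hcf]
    _ = (a ∗ᵂ b) +ᵂ ((inv (a ∗ᵂ b) ∗ᵂ (a ∗ᵂ b)) +ᵂ (inv b ∗ᵂ b)) := aA ..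
    _ = (a ∗ᵂ b) +ᵂ (inv (a ∗ᵂ b) ∗ᵂ (a ∗ᵂ b)) := by rw [hfg_add]
    _ = a ∗ᵂ b := hcf
end WBAux

namespace WBAux
open WeakBrace
variable {S : Type*} [DualWeakBrace S]

lemma lam_cdot (a b : S) : lam a b = add (cdot a b) b := by
  show add (neg a) (mul a b) = add (add (add (neg a) (mul a b)) (neg b)) b
  rw [aA, aA, keyAbs a b]

end WBAux

open WeakBrace
theorem stmt11 {S : Type*} [DualWeakBrace S] (I : Set S) (hI : IsFullAddSub I) :
    IsLeftIdeal I ↔ ∀ a : S, ∀ x ∈ I, cdot a x ∈ I := by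
  constructor
  · rintro ⟨-, hlam⟩ a x hx
    have h1 : lam a x ∈ I := hlam a x hx
    have h2 : neg x ∈ I := hI.2.2 x hx
    exact hI.2.1 _ h1 _ h2
  · intro h
    refine ⟨hI, fun a x hx => ?_⟩
    rw [WBAux.lam_cdot a x]
    exact hI.2.1 _ (h a x hx) x hx
end

section
/- In a dual weak brace S, if I is an ideal of S, then x · a ∈ I for all x ∈ I and a ∈ S, where x · a := -x + x ∘ a - a. -/
section InvSG

variable {S : Type*}

lemma iv_iv (op : S → S → S) (iv : S → S)
    (hr : ∀ a : S, op (op a (iv a)) a = a)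
    (hr' : ∀ a : S, op (op (iv a) a) (iv a) = iv a)
    (hu : ∀ a x : S, op (op a x) a = a → op (op x a) x = x → x = iv a)
    (a : S) : iv (iv a) = a :=
  (hu (iv a) a (hr' a) (hr a)).symm

lemma idem_pt (op : S → S → S)
    (ha : ∀ a b c : S, op (op a b) c = op a (op b c))
    {e : S} (he : op e e = e) (t : S) : op e (op e t) = op e t := by
  rw [← ha, he]

lemma hr_pt (op : S → S → S) (iv : S → S)
    (ha : ∀ a b c : S, op (op a b) c = op a (op b c))
    (hr : ∀ a : S, op (op a (iv a)) a = a)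
    (a t : S) : op a (op (iv a) (op a t)) = op a t := by
  rw [← ha, ← ha, hr]

lemma hr'_pt (op : S → S → S) (iv : S → S)
    (ha : ∀ a b c : S, op (op a b) c = op a (op b c))
    (hr' : ∀ a : S, op (op (iv a) a) (iv a) = iv a)
    (a t : S) : op (iv a) (op a (op (iv a) t)) = op (iv a) t := by
  rw [← ha, ← ha, hr']

lemma idem_op (op : S → S → S) (iv : S → S)
    (ha : ∀ a b c : S, op (op a b) c = op a (op b c))
    (hr : ∀ a : S, op (op a (iv a)) a = a)
    (hr' : ∀ a : S, op (op (iv a) a) (iv a) = iv a)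
    (hu : ∀ a x : S, op (op a x) a = a → op (op x a) x = x → x = iv a)
    (e f : S) (he : op e e = e) (hf : op f f = f) :
    op (op e f) (op e f) = op e f ∧ iv (op e f) = op e f := by
  have hz1 : op e (op f (op (iv (op e f)) (op e f))) = op e f := by
    have h := hr (op e f); simpa only [ha] using h
  have hz2p : ∀ t, op (iv (op e f)) (op e (op f (op (iv (op e f)) t)))
      = op (iv (op e f)) t := by
    intro t
    have h := congrArg (fun w => op w t) (hr' (op e f))
    simpa only [ha] using h
  have hx : op f (op (iv (op e f)) e) = iv (op e f) := by
    apply hu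
    · simp only [ha]
      rw [idem_pt op ha hf, idem_pt op ha he]
      exact hz1
    · simp only [ha]
      rw [idem_pt op ha he, idem_pt op ha hf, hz2p e]
  have hzz : op (iv (op e f)) (iv (op e f)) = iv (op e f) := by
    conv_lhs => rw [← hx]
    simp only [ha]
    rw [hz2p e]
    exact hx
  have hiz : iv (iv (op e f)) = iv (op e f) := by
    have h1 : op (op (iv (op e f)) (iv (op e f))) (iv (op e f)) = iv (op e f) := by
      rw [hzz, hzz]
    exact (hu _ _ h1 h1).symm
  have hef2 : iv (op e f) = op e f := hiz.symm.trans (iv_iv op iv hr hr' hu (op e f))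
  constructor
  · have h := hzz; rw [hef2] at h; exact h
  · exact hef2

lemma idem_comm (op : S → S → S) (iv : S → S)
    (ha : ∀ a b c : S, op (op a b) c = op a (op b c))
    (hr : ∀ a : S, op (op a (iv a)) a = a)
    (hr' : ∀ a : S, op (op (iv a) a) (iv a) = iv a)
    (hu : ∀ a x : S, op (op a x) a = a → op (op x a) x = x → x = iv a)
    (e f : S) (he : op e e = e) (hf : op f f = f) : op e f = op f e := by
  obtain ⟨hef, hivef⟩ := idem_op op iv ha hr hr' hu e f he hf
  obtain ⟨hfe, -⟩ := idem_op op iv ha hr hr' hu f e hf he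
  have hefn : op e (op f (op e f)) = op e f := by simpa only [ha] using hef
  have hfen : op f (op e (op f e)) = op f e := by simpa only [ha] using hfe
  have h1 : op (op (op e f) (op f e)) (op e f) = op e f := by
    simp only [ha]
    rw [idem_pt op ha hf, idem_pt op ha he]
    exact hefn
  have h2 : op (op (op f e) (op e f)) (op f e) = op f e := by
    simp only [ha]
    rw [idem_pt op ha he, idem_pt op ha hf]
    exact hfen
  have h := hu (op e f) (op f e) h1 h2
  rw [hivef] at h
  exact h.symm

lemma idem_comm_pt (op : S → S → S) (iv : S → S)
    (ha : ∀ a b c : S, op (op a b) c = op a (op b c))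
    (hr : ∀ a : S, op (op a (iv a)) a = a)
    (hr' : ∀ a : S, op (op (iv a) a) (iv a) = iv a)
    (hu : ∀ a x : S, op (op a x) a = a → op (op x a) x = x → x = iv a)
    (e f : S) (he : op e e = e) (hf : op f f = f) (t : S) :
    op e (op f t) = op f (op e t) := by
  rw [← ha, idem_comm op iv ha hr hr' hu e f he hf, ha]

lemma iv_idem (op : S → S → S) (iv : S → S)
    (hu : ∀ a x : S, op (op a x) a = a → op (op x a) x = x → x = iv a)
    (e : S) (he : op e e = e) : iv e = e := by
  have h : op (op e e) e = e := by rw [he, he]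
  exact (hu e e h h).symm

lemma op_iv_idem (op : S → S → S) (iv : S → S)
    (ha : ∀ a b c : S, op (op a b) c = op a (op b c))
    (hr : ∀ a : S, op (op a (iv a)) a = a)
    (a : S) : op (op a (iv a)) (op a (iv a)) = op a (iv a) := by
  rw [← ha, hr]

lemma iv_op_idem (op : S → S → S) (iv : S → S)
    (ha : ∀ a b c : S, op (op a b) c = op a (op b c))
    (hr' : ∀ a : S, op (op (iv a) a) (iv a) = iv a)
    (a : S) : op (op (iv a) a) (op (iv a) a) = op (iv a) a := by
  rw [← ha, hr']

lemma iv_op (op : S → S → S) (iv : S → S)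
    (ha : ∀ a b c : S, op (op a b) c = op a (op b c))
    (hr : ∀ a : S, op (op a (iv a)) a = a)
    (hr' : ∀ a : S, op (op (iv a) a) (iv a) = iv a)
    (hu : ∀ a x : S, op (op a x) a = a → op (op x a) x = x → x = iv a)
    (a b : S) : iv (op a b) = op (iv b) (iv a) := by
  have hbb := op_iv_idem op iv ha hr b
  have haa' := iv_op_idem op iv ha hr' a
  have h1 : op (op (op a b) (op (iv b) (iv a))) (op a b) = op a b := by
    have key := idem_comm_pt op iv ha hr hr' hu (op b (iv b)) (op (iv a) a) hbb haa' b
    simp only [ha] at key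
    simp only [ha]
    rw [key, hr_pt op iv ha hr a]
    have hb : op b (op (iv b) b) = b := by rw [← ha, hr]
    rw [hb]
  have h2 : op (op (op (iv b) (iv a)) (op a b)) (op (iv b) (iv a)) = op (iv b) (iv a) := by
    have key := idem_comm_pt op iv ha hr hr' hu (op (iv a) a) (op b (iv b)) haa' hbb (iv a)
    simp only [ha] at key
    simp only [ha]
    rw [key, hr'_pt op iv ha hr' b]
    have hA : op (iv a) (op a (iv a)) = iv a := by rw [← ha, hr']
    rw [hA]
  exact (hu (op a b) (op (iv b) (iv a)) h1 h2).symm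

end InvSG

namespace WeakBrace

variable {S : Type*} [DualWeakBrace S]

lemma Dn (a b c : S) : add (mul a b) (add (neg a) (mul a c)) = mul a (add b c) := by
  have h := (distrib a b c).symm
  simpa only [add_assoc] using h

lemma Dpt (a b c t : S) :
    add (mul a b) (add (neg a) (add (mul a c) t)) = add (mul a (add b c)) t := by
  have h := congrArg (fun z => add z t) (distrib a b c).symm
  simpa only [add_assoc] using h

lemma nneg (a : S) : neg (neg a) = a :=
  iv_iv add neg add_reg neg_reg neg_unique a

lemma neg_add' (u v : S) : neg (add u v) = add (neg v) (neg u) :=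
  iv_op add neg add_assoc add_reg neg_reg neg_unique u v

lemma inv_mul' (a b : S) : inv (mul a b) = mul (inv b) (inv a) :=
  iv_op mul inv mul_assoc mul_reg inv_reg inv_unique a b

lemma addidem_comm (e f : S) (he : add e e = e) (hf : add f f = f) :
    add e f = add f e :=
  idem_comm add neg add_assoc add_reg neg_reg neg_unique e f he hf

lemma neg_of_mul (a b : S) :
    neg (mul a b) = add (add (neg a) (mul a (neg b))) (neg a) := by
  have c1 : add (add (mul a b) (add (add (neg a) (mul a (neg b))) (neg a))) (mul a b)
      = mul a b := by
    simp only [add_assoc]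
    rw [Dpt a b (neg b) (add (neg a) (mul a b)), Dn a (add b (neg b)) b, add_reg b]
  have c2 : add (add (add (add (neg a) (mul a (neg b))) (neg a)) (mul a b))
      (add (add (neg a) (mul a (neg b))) (neg a))
      = add (add (neg a) (mul a (neg b))) (neg a) := by
    simp only [add_assoc]
    rw [Dpt a (neg b) b (add (neg a) (add (mul a (neg b)) (neg a))),
      Dpt a (add (neg b) b) (neg b) (neg a), neg_reg b]
  exact (neg_unique (mul a b) _ c1 c2).symm

lemma mul_idem_comm (e a : S) (he : mul e e = e) : mul a e = mul e a := by
  have haa : mul (mul a (inv a)) (mul a (inv a)) = mul a (inv a) :=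
    op_iv_idem mul inv mul_assoc mul_reg a
  have hiv_e : inv e = e := iv_idem mul inv inv_unique e he
  have hcf := DualWeakBrace.clifford (mul e a)
  rw [inv_mul' e a, hiv_e] at hcf
  simp only [mul_assoc] at hcf
  rw [idem_pt mul mul_assoc he a] at hcf
  have hswap := idem_comm_pt mul inv mul_assoc mul_reg inv_reg inv_unique
    e (mul a (inv a)) he haa e
  have E1 : mul (mul a (inv a)) e = mul (inv a) (mul e a) := by
    calc mul (mul a (inv a)) e = mul (mul a (inv a)) (mul e e) := by rw [he]
      _ = mul e (mul (mul a (inv a)) e) := hswap.symm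
      _ = mul e (mul a (mul (inv a) e)) := by rw [mul_assoc]
      _ = mul (inv a) (mul e a) := hcf
  calc mul a e = mul a (mul (inv a) (mul a e)) :=
        (hr_pt mul inv mul_assoc mul_reg a e).symm
    _ = mul a (mul (mul (inv a) a) e) := by rw [mul_assoc (inv a) a e]
    _ = mul a (mul (mul a (inv a)) e) := by rw [DualWeakBrace.clifford a]
    _ = mul a (mul (inv a) (mul e a)) := by rw [E1]
    _ = mul (mul a (inv a)) (mul e a) := (mul_assoc _ _ _).symm
    _ = mul (mul (mul a (inv a)) e) a := (mul_assoc _ _ _).symm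
    _ = mul (mul e (mul a (inv a))) a := by
        rw [idem_comm mul inv mul_assoc mul_reg inv_reg inv_unique
          (mul a (inv a)) e haa he]
    _ = mul e (mul (mul a (inv a)) a) := mul_assoc _ _ _
    _ = mul e a := by rw [mul_reg]

lemma conj_mul (x a : S) : mul x a = mul a (mul (mul (inv a) x) a) := by
  have he : mul (mul a (inv a)) (mul a (inv a)) = mul a (inv a) :=
    op_iv_idem mul inv mul_assoc mul_reg a
  have h1 : mul a (mul (mul (inv a) x) a) = mul (mul a (inv a)) (mul x a) := by
    rw [mul_assoc (inv a) x a, ← mul_assoc a (inv a) (mul x a)]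
  have h2 : mul (mul a (inv a)) (mul x a) = mul (mul x a) (mul a (inv a)) :=
    (mul_idem_comm (mul a (inv a)) (mul x a) he).symm
  have h3 : mul a (mul a (inv a)) = a := by
    rw [DualWeakBrace.clifford a, ← mul_assoc, mul_reg]
  calc mul x a = mul x (mul a (mul a (inv a))) := by rw [h3]
    _ = mul (mul x a) (mul a (inv a)) := (mul_assoc x a (mul a (inv a))).symm
    _ = mul (mul a (inv a)) (mul x a) := h2.symm
    _ = mul a (mul (mul (inv a) x) a) := h1.symm

lemma absorb_idem (a f : S) (hf : add f f = f) :
    add (add a (neg a)) (add (mul a f) (neg a)) = add (mul a f) (neg a) := by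
  have hae : mul a (mul (inv a) a) = a := by rw [← mul_assoc, mul_reg]
  have he'' : mul (inv a) a = add (neg a) a := by
    rw [← DualWeakBrace.clifford a, link]
  have he'idem : add (mul (inv a) a) (mul (inv a) a) = mul (inv a) a := by
    rw [he'', add_assoc, ← add_assoc a (neg a) a, add_reg]
  calc add (add a (neg a)) (add (mul a f) (neg a))
      = add (add (mul a (mul (inv a) a)) (neg a)) (add (mul a f) (neg a)) := by rw [hae]
    _ = add (mul a (mul (inv a) a)) (add (neg a) (add (mul a f) (neg a))) :=
        add_assoc _ _ _
    _ = add (mul a (add (mul (inv a) a) f)) (neg a) := Dpt a (mul (inv a) a) f (neg a)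
    _ = add (mul a (add f (mul (inv a) a))) (neg a) := by
        rw [addidem_comm (mul (inv a) a) f he'idem hf]
    _ = add (add (mul a f) (add (neg a) (mul a (mul (inv a) a)))) (neg a) := by
        rw [Dn a f (mul (inv a) a)]
    _ = add (add (mul a f) (add (neg a) a)) (neg a) := by rw [hae]
    _ = add (mul a f) (add (add (neg a) a) (neg a)) :=
        add_assoc (mul a f) (add (neg a) a) (neg a)
    _ = add (mul a f) (neg a) := by rw [neg_reg]

lemma sq_absorb (a y : S) :
    add (add a (neg a)) (add (mul a y) (neg a)) = add (mul a y) (neg a) := by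
  have hf : add (add y (neg y)) (add y (neg y)) = add y (neg y) :=
    op_iv_idem add neg add_assoc add_reg y
  have hss : add (add (mul a y) (neg a)) (neg (add (mul a y) (neg a)))
      = add (mul a (add y (neg y))) (neg a) := by
    rw [neg_add', nneg, neg_of_mul]
    simp only [add_assoc]
    rw [hr'_pt add neg add_assoc neg_reg a (add (mul a (neg y)) (neg a)),
      Dpt a y (neg y) (neg a)]
  have habs := absorb_idem a (add y (neg y)) hf
  rw [← hss] at habs
  calc add (add a (neg a)) (add (mul a y) (neg a))
      = add (add a (neg a))
          (add (add (add (mul a y) (neg a)) (neg (add (mul a y) (neg a))))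
            (add (mul a y) (neg a))) := by
        rw [add_reg (add (mul a y) (neg a))]
    _ = add (add (add a (neg a))
          (add (add (mul a y) (neg a)) (neg (add (mul a y) (neg a)))))
          (add (mul a y) (neg a)) := (add_assoc _ _ _).symm
    _ = add (add (add (mul a y) (neg a)) (neg (add (mul a y) (neg a))))
          (add (mul a y) (neg a)) := by rw [habs]
    _ = add (mul a y) (neg a) := add_reg _

end WeakBrace

open WeakBrace
theorem stmt12 {S : Type*} [DualWeakBrace S] (I : Set S) (hI : IsIdeal I) :
    ∀ x ∈ I, ∀ a : S, cdot x a ∈ I := by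
  intro x hx a
  obtain ⟨⟨⟨hIe, hIadd, hIneg⟩, hInorm⟩, hIlam, hImul⟩ := hI
  have hy : WeakBrace.mul (WeakBrace.mul (WeakBrace.inv a) x) a ∈ I := hImul.2.2.2 a x hx
  set y := WeakBrace.mul (WeakBrace.mul (WeakBrace.inv a) x) a with hydef
  have hxa : WeakBrace.mul x a = WeakBrace.mul a y := by
    rw [hydef]; exact WeakBrace.conj_mul x a
  have hmem1 : lam a y ∈ I := hIlam a y hy
  have hmem2 : WeakBrace.add (WeakBrace.add (WeakBrace.neg (WeakBrace.neg a)) (lam a y))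
      (WeakBrace.neg a) ∈ I := hInorm (WeakBrace.neg a) _ hmem1
  rw [WeakBrace.nneg] at hmem2
  have hEq : WeakBrace.add (WeakBrace.add a (lam a y)) (WeakBrace.neg a)
      = WeakBrace.add (WeakBrace.mul a y) (WeakBrace.neg a) := by
    show WeakBrace.add (WeakBrace.add a (WeakBrace.add (WeakBrace.neg a) (WeakBrace.mul a y)))
        (WeakBrace.neg a) = WeakBrace.add (WeakBrace.mul a y) (WeakBrace.neg a)
    simp only [WeakBrace.add_assoc]
    simpa only [WeakBrace.add_assoc] using WeakBrace.sq_absorb a y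
  have hmem3 : WeakBrace.add (WeakBrace.mul a y) (WeakBrace.neg a) ∈ I := hEq ▸ hmem2
  have hfinal : cdot x a
      = WeakBrace.add (WeakBrace.neg x) (WeakBrace.add (WeakBrace.mul a y) (WeakBrace.neg a)) := by
    show WeakBrace.add (WeakBrace.add (WeakBrace.neg x) (WeakBrace.mul x a)) (WeakBrace.neg a)
        = WeakBrace.add (WeakBrace.neg x) (WeakBrace.add (WeakBrace.mul a y) (WeakBrace.neg a))
    rw [hxa, WeakBrace.add_assoc]
  rw [hfinal]
  exact hIadd _ (hIneg x hx) _ hmem3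
end

section
/- In a dual weak brace S, a normal subsemigroup I of (S,+) is an ideal of S if and only if x · a ∈ I and λ_a(x) ∈ I for all a ∈ S and x ∈ I. In particular, for any such I, a ∘ x ∘ a⁻ ∈ I for all a ∈ S, x ∈ I. -/
/-- Auxiliary: an inverse semigroup structure given by explicit data. -/
structure InvSg (S : Type*) where
  op : S → S → S
  iv : S → S
  assoc : ∀ a b c : S, op (op a b) c = op a (op b c)
  reg : ∀ a : S, op (op a (iv a)) a = a
  reg' : ∀ a : S, op (op (iv a) a) (iv a) = iv a
  uniq : ∀ a x : S, op (op a x) a = a → op (op x a) x = x → x = iv a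

namespace InvSg

variable {S : Type*} (M : InvSg S)

lemma iv_iv (a : S) : M.iv (M.iv a) = a :=
  (M.uniq (M.iv a) a (M.reg' a) (M.reg a)).symm

lemma idem_iv {e : S} (he : M.op e e = e) : M.iv e = e :=
  (M.uniq e e (by rw [he, he]) (by rw [he, he])).symm

/-- `a a⁻` is idempotent. -/
lemma op_iv_idem (a : S) : M.op (M.op a (M.iv a)) (M.op a (M.iv a)) = M.op a (M.iv a) := by
  rw [← M.assoc, M.reg]

/-- `a⁻ a` is idempotent. -/
lemma iv_op_idem (a : S) : M.op (M.op (M.iv a) a) (M.op (M.iv a) a) = M.op (M.iv a) a := by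
  rw [← M.assoc, M.reg']

/-- Product of idempotents is idempotent. -/
lemma idem_op {e f : S} (he : M.op e e = e) (hf : M.op f f = f) :
    M.op (M.op e f) (M.op e f) = M.op e f := by
  set x := M.iv (M.op e f) with hxdef
  -- normalized reg' : x (e (f x)) = x
  have hx : M.op x (M.op e (M.op f x)) = x := by
    have := M.reg' (M.op e f); simpa only [M.assoc] using this
  -- h1 : x (e (f (x e))) = x e
  have h1 : M.op x (M.op e (M.op f (M.op x e))) = M.op x e := by
    have := congrArg (fun z => M.op z e) hx; simpa only [M.assoc] using this
  set g := M.op f (M.op x e) with hgdef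
  have hg2 : M.op g g = g := by
    show M.op (M.op f (M.op x e)) (M.op f (M.op x e)) = M.op f (M.op x e)
    simp only [M.assoc]
    exact congrArg (M.op f) h1
  have hef_g : M.op (M.op (M.op e f) g) (M.op e f) = M.op e f := by
    -- (ef) (f x e) (ef) = ef
    have hreg : M.op (M.op (M.op e f) x) (M.op e f) = M.op e f := M.reg (M.op e f)
    -- normalize
    have hreg' : M.op e (M.op f (M.op x (M.op e f))) = M.op e f := by
      simpa only [M.assoc] using hreg
    have hff : ∀ t : S, M.op f (M.op f t) = M.op f t := fun t => by
      have := congrArg (fun z => M.op z t) hf; simpa only [M.assoc] using this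
    have hee : ∀ t : S, M.op e (M.op e t) = M.op e t := fun t => by
      have := congrArg (fun z => M.op z t) he; simpa only [M.assoc] using this
    show M.op (M.op (M.op e f) (M.op f (M.op x e))) (M.op e f) = M.op e f
    simp only [M.assoc]
    rw [hff, hee]  -- hope: reduces e(f(f(x(e(e f))))) appropriately
    exact hreg'
  have hg_ef : M.op (M.op g (M.op e f)) g = g := by
    show M.op (M.op (M.op f (M.op x e)) (M.op e f)) (M.op f (M.op x e)) = M.op f (M.op x e)
    have hee : ∀ t : S, M.op e (M.op e t) = M.op e t := fun t => by
      have := congrArg (fun z => M.op z t) he; simpa only [M.assoc] using this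
    have hff : ∀ t : S, M.op f (M.op f t) = M.op f t := fun t => by
      have := congrArg (fun z => M.op z t) hf; simpa only [M.assoc] using this
    simp only [M.assoc]
    rw [hee, hff]
    exact congrArg (M.op f) h1
  have hgx : g = x := M.uniq (M.op e f) g hef_g hg_ef
  have hxidem : M.op x x = x := hgx ▸ hg2
  have : M.iv x = x := M.idem_iv hxidem
  have hefx : M.op e f = x := by rw [← M.iv_iv (M.op e f), ← hxdef, this]
  rw [hefx]; exact hxidem

/-- Idempotents commute. -/
lemma idem_comm {e f : S} (he : M.op e e = e) (hf : M.op f f = f) :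
    M.op e f = M.op f e := by
  have hef := M.idem_op he hf
  have hfe := M.idem_op hf he
  have h1 : M.op (M.op (M.op e f) (M.op f e)) (M.op e f) = M.op e f := by
    have hee : ∀ t : S, M.op e (M.op e t) = M.op e t := fun t => by
      have := congrArg (fun z => M.op z t) he; simpa only [M.assoc] using this
    have hff : ∀ t : S, M.op f (M.op f t) = M.op f t := fun t => by
      have := congrArg (fun z => M.op z t) hf; simpa only [M.assoc] using this
    have hef' : M.op e (M.op f (M.op e f)) = M.op e f := by
      simpa only [M.assoc] using hef
    simp only [M.assoc]
    rw [hff, hee]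
    exact hef'
  have h2 : M.op (M.op (M.op f e) (M.op e f)) (M.op f e) = M.op f e := by
    have hee : ∀ t : S, M.op e (M.op e t) = M.op e t := fun t => by
      have := congrArg (fun z => M.op z t) he; simpa only [M.assoc] using this
    have hff : ∀ t : S, M.op f (M.op f t) = M.op f t := fun t => by
      have := congrArg (fun z => M.op z t) hf; simpa only [M.assoc] using this
    have hfe' : M.op f (M.op e (M.op f e)) = M.op f e := by
      simpa only [M.assoc] using hfe
    simp only [M.assoc]
    rw [hee, hff]
    exact hfe'
  have hA : M.op f e = M.iv (M.op e f) := M.uniq (M.op e f) (M.op f e) h1 h2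
  have hB : M.op e f = M.iv (M.op e f) :=
    M.uniq (M.op e f) (M.op e f) (by rw [hef, hef]) (by rw [hef, hef])
  rw [hB, hA]


/-- `(ab)⁻ = b⁻ a⁻`. -/
lemma iv_op (a b : S) : M.iv (M.op a b) = M.op (M.iv b) (M.iv a) := by
  have hcomm : M.op (M.op b (M.iv b)) (M.op (M.iv a) a)
      = M.op (M.op (M.iv a) a) (M.op b (M.iv b)) :=
    M.idem_comm (M.op_iv_idem b) (M.iv_op_idem a)
  have hregb : M.op b (M.op (M.iv b) b) = b := by
    simpa only [M.assoc] using M.reg b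
  have hreg'a : M.op (M.iv a) (M.op a (M.iv a)) = M.iv a := by
    simpa only [M.assoc] using M.reg' a
  have h1 : M.op (M.op (M.op a b) (M.op (M.iv b) (M.iv a))) (M.op a b) = M.op a b := by
    have step : M.op b (M.op (M.iv b) (M.op (M.iv a) (M.op a b)))
        = M.op (M.iv a) (M.op a b) := by
      have := congrArg (fun z => M.op z b) hcomm
      simp only [M.assoc] at this
      rw [this, hregb]
    have step2 : M.op a (M.op (M.iv a) (M.op a b)) = M.op a b := by
      have := congrArg (fun z => M.op z b) (M.reg a)
      simpa only [M.assoc] using this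
    simp only [M.assoc]
    rw [step, step2]
  have h2 : M.op (M.op (M.op (M.iv b) (M.iv a)) (M.op a b)) (M.op (M.iv b) (M.iv a))
      = M.op (M.iv b) (M.iv a) := by
    have step : M.op (M.iv a) (M.op a (M.op b (M.op (M.iv b) (M.iv a))))
        = M.op b (M.op (M.iv b) (M.iv a))
        := by
      have := congrArg (fun z => M.op z (M.iv a)) hcomm.symm
      simp only [M.assoc] at this
      rw [this]
      -- now : b (b⁻ (a⁻ (a a⁻))) ; reduce a⁻ (a a⁻) = a⁻
      rw [hreg'a]
    have step2 : M.op (M.iv b) (M.op b (M.op (M.iv b) (M.iv a))) = M.op (M.iv b) (M.iv a) := by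
      have := congrArg (fun z => M.op z (M.iv a)) (M.reg' b)
      simpa only [M.assoc] using this
    simp only [M.assoc]
    rw [step, step2]
  exact (M.uniq (M.op a b) (M.op (M.iv b) (M.iv a)) h1 h2).symm

/-- In a Clifford (inverse) semigroup, idempotents are central. -/
lemma central (hcl : ∀ a : S, M.op a (M.iv a) = M.op (M.iv a) a)
    {e : S} (he : M.op e e = e) (a : S) : M.op e a = M.op a e := by
  have hiv_ae : M.iv (M.op a e) = M.op e (M.iv a) := by
    rw [M.iv_op, M.idem_iv he]
  -- step1 : a e a⁻ = e (a⁻ a), derived from hcl (a e)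
  have hstep := hcl (M.op a e)
  rw [hiv_ae] at hstep
  -- hstep : (a e) (e a⁻) = (e a⁻) (a e)
  have hee : ∀ t : S, M.op e (M.op e t) = M.op e t := fun t => by
    have := congrArg (fun z => M.op z t) he; simpa only [M.assoc] using this
  have hstep' : M.op a (M.op e (M.iv a)) = M.op e (M.op (M.iv a) (M.op a e)) := by
    have := hstep
    simp only [M.assoc] at this
    rwa [hee] at this
  -- f := a⁻ a ; f commutes with e
  have hf : M.op (M.op (M.iv a) a) (M.op (M.iv a) a) = M.op (M.iv a) a := M.iv_op_idem a
  have hcf : M.op e (M.op (M.iv a) a) = M.op (M.op (M.iv a) a) e := M.idem_comm he hf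
  -- fa : (a⁻ a) a = a  (using hcl)
  have hfa : M.op (M.op (M.iv a) a) a = a := by rw [← hcl a, M.reg a]
  -- multiply hstep' on the right by a and reduce
  have h4 := congrArg (fun z => M.op z a) hstep'
  simp only [M.assoc] at h4
  -- h4 : a (e (a⁻ a)) = e (a⁻ (a (e a)))
  -- LHS: a (e (a⁻ a)) = a ((a⁻ a) e) ... compute LHS = a e
  have hL : M.op a (M.op e (M.op (M.iv a) a)) = M.op a e := by
    have hc' : M.op e (M.op (M.iv a) a) = M.op (M.iv a) (M.op a e) := by
      have := hcf; simp only [M.assoc] at this; exact this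
    rw [hc']
    have := congrArg (fun z => M.op z e) (M.reg a)
    simpa only [M.assoc] using this
  -- RHS: e (a⁻ (a (e a))) : use a e a⁻ = e a⁻ a e ... instead use hstep' backwards.
  -- We compute e (a⁻ (a (e a))) = e a.
  have hR : M.op e (M.op (M.iv a) (M.op a (M.op e a))) = M.op e a := by
    -- a⁻ (a (e a)) = (a⁻ a) (e a) = (e (a⁻ a)) a ... use hcf.symm : (a⁻ a) e = e (a⁻ a)
    have hc2 : M.op (M.op (M.iv a) a) (M.op e a) = M.op e (M.op (M.op (M.iv a) a) a) := by
      have := congrArg (fun z => M.op z a) hcf.symm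
      simp only [M.assoc] at this
      simp only [M.assoc]
      exact this
    rw [hfa] at hc2
    -- hc2 : (a⁻ a) (e a) = e a i.e. a⁻ (a (e a)) = e a after normalization
    have hc3 : M.op (M.iv a) (M.op a (M.op e a)) = M.op e a := by
      simpa only [M.assoc] using hc2
    rw [hc3, hee]
  rw [hL, hR] at h4
  exact h4.symm

end InvSg
section Brace
open WeakBrace

variable {S : Type*} [DualWeakBrace S]

/-- The additive inverse semigroup of a weak brace. -/
def addSg (S : Type*) [WeakBrace S] : InvSg S :=
  ⟨WeakBrace.add, WeakBrace.neg, WeakBrace.add_assoc, WeakBrace.add_reg,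
    WeakBrace.neg_reg, WeakBrace.neg_unique⟩

/-- The multiplicative inverse semigroup of a weak brace. -/
def mulSg (S : Type*) [WeakBrace S] : InvSg S :=
  ⟨WeakBrace.mul, WeakBrace.inv, WeakBrace.mul_assoc, WeakBrace.mul_reg,
    WeakBrace.inv_reg, WeakBrace.inv_unique⟩

local infixl:65 " ⨭ " => WeakBrace.add (S := S)
local infixl:70 " ⨰ " => WeakBrace.mul (S := S)
local prefix:max "∻" => WeakBrace.neg (S := S)
local postfix:max "ᘁ" => WeakBrace.inv (S := S)

lemma bneg_neg (a : S) : ∻(∻a) = a := (addSg S).iv_iv a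
lemma binv_inv (a : S) : (aᘁ)ᘁ = a := (mulSg S).iv_iv a
lemma bneg_add (a b : S) : ∻(a ⨭ b) = ∻b ⨭ ∻a := (addSg S).iv_op a b
lemma blink2 (a : S) : aᘁ ⨰ a = ∻(aᘁ) ⨭ aᘁ := by
  have := WeakBrace.link (aᘁ); rwa [binv_inv] at this

lemma bneg_idem {e : S} (he : e ⨭ e = e) : ∻e = e := (addSg S).idem_iv he

lemma baddidem (a : S) : (a ⨭ ∻a) ⨭ (a ⨭ ∻a) = a ⨭ ∻a := (addSg S).op_iv_idem a

/-- Lemma N : `-(a∘b) = -a + a∘(-b) - a`. -/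
lemma bN (a b : S) : ∻(a ⨰ b) = (∻a ⨭ a ⨰ ∻b) ⨭ ∻a := by
  have d1 : a ⨰ ((b ⨭ ∻b) ⨭ b) = ((a ⨰ (b ⨭ ∻b)) ⨭ ∻a) ⨭ a ⨰ b :=
    WeakBrace.distrib a (b ⨭ ∻b) b
  rw [WeakBrace.add_reg, WeakBrace.distrib] at d1
  -- d1 : a⨰b = (((a⨰b ⨭ ∻a) ⨭ a⨰∻b) ⨭ ∻a) ⨭ a⨰b
  have d2 : a ⨰ ((∻b ⨭ b) ⨭ ∻b) = ((a ⨰ (∻b ⨭ b)) ⨭ ∻a) ⨭ a ⨰ ∻b :=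
    WeakBrace.distrib a (∻b ⨭ b) (∻b)
  rw [WeakBrace.neg_reg, WeakBrace.distrib] at d2
  -- d2 : a⨰∻b = (((a⨰∻b ⨭ ∻a) ⨭ a⨰b) ⨭ ∻a) ⨭ a⨰∻b
  have h1 : ((a ⨰ b) ⨭ ((∻a ⨭ a ⨰ ∻b) ⨭ ∻a)) ⨭ (a ⨰ b) = a ⨰ b := by
    conv_rhs => rw [d1]
    simp only [WeakBrace.add_assoc]
  have h2 : (((∻a ⨭ a ⨰ ∻b) ⨭ ∻a) ⨭ (a ⨰ b)) ⨭ ((∻a ⨭ a ⨰ ∻b) ⨭ ∻a)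
      = (∻a ⨭ a ⨰ ∻b) ⨭ ∻a := by
    conv_rhs => rw [congrArg (fun z => (∻a ⨭ z) ⨭ ∻a) d2]
    simp only [WeakBrace.add_assoc]
  exact (WeakBrace.neg_unique (a ⨰ b) _ h1 h2).symm

/-- Lemma K : `(a - a) + a∘b = a∘b`. -/
lemma bK (a b : S) : (a ⨭ ∻a) ⨭ a ⨰ b = a ⨰ b := by
  set u := a ⨰ b with hu
  have huu : u = ∻(∻u) := WeakBrace.neg_unique (∻u) u (WeakBrace.neg_reg u) (WeakBrace.add_reg u)
  have hneg : ∻u = (∻a ⨭ a ⨰ ∻b) ⨭ ∻a := bN a b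
  have h1 : (∻u ⨭ ((a ⨭ ∻a) ⨭ u)) ⨭ ∻u = ∻u := by
    have key : ∻u ⨭ (a ⨭ ∻a) = ∻u := by
      rw [hneg]
      calc ((∻a ⨭ a ⨰ ∻b) ⨭ ∻a) ⨭ (a ⨭ ∻a)
          = (∻a ⨭ a ⨰ ∻b) ⨭ ((∻a ⨭ a) ⨭ ∻a) := by simp only [WeakBrace.add_assoc]
        _ = (∻a ⨭ a ⨰ ∻b) ⨭ ∻a := by rw [WeakBrace.neg_reg]
    have : ∻u ⨭ ((a ⨭ ∻a) ⨭ u) = ∻u ⨭ u := by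
      rw [← WeakBrace.add_assoc, key]
    rw [this]; exact WeakBrace.neg_reg u
  have h2 : (((a ⨭ ∻a) ⨭ u) ⨭ ∻u) ⨭ ((a ⨭ ∻a) ⨭ u) = (a ⨭ ∻a) ⨭ u := by
    have hfidem : (a ⨭ ∻a) ⨭ (a ⨭ ∻a) = a ⨭ ∻a := (addSg S).op_iv_idem a
    have hpidem : (u ⨭ ∻u) ⨭ (u ⨭ ∻u) = u ⨭ ∻u := (addSg S).op_iv_idem u
    have hcomm : (u ⨭ ∻u) ⨭ (a ⨭ ∻a) = (a ⨭ ∻a) ⨭ (u ⨭ ∻u) :=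
      (addSg S).idem_comm hpidem hfidem
    calc (((a ⨭ ∻a) ⨭ u) ⨭ ∻u) ⨭ ((a ⨭ ∻a) ⨭ u)
        = (a ⨭ ∻a) ⨭ (((u ⨭ ∻u) ⨭ (a ⨭ ∻a)) ⨭ u) := by simp only [WeakBrace.add_assoc]
      _ = (a ⨭ ∻a) ⨭ (((a ⨭ ∻a) ⨭ (u ⨭ ∻u)) ⨭ u) := by rw [hcomm]
      _ = ((a ⨭ ∻a) ⨭ (a ⨭ ∻a)) ⨭ ((u ⨭ ∻u) ⨭ u) := by simp only [WeakBrace.add_assoc]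
      _ = (a ⨭ ∻a) ⨭ u := by rw [hfidem, WeakBrace.add_reg]
  have := WeakBrace.neg_unique (∻u) ((a ⨭ ∻a) ⨭ u) h1 h2
  rw [this, ← huu]

/-- Lemma C : `a - a = -a + a`. -/
lemma bC (a : S) : a ⨭ ∻a = ∻a ⨭ a := by
  have h1 : (a ⨭ ∻a) ⨭ (∻a ⨭ a) = ∻a ⨭ a := by
    have := bK a (aᘁ); rwa [WeakBrace.link] at this
  have h2 : (∻a ⨭ a) ⨭ (a ⨭ ∻a) = a ⨭ ∻a := by
    have := bK (∻a) ((∻a)ᘁ)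
    rw [WeakBrace.link, bneg_neg] at this
    exact this
  have hcomm : (a ⨭ ∻a) ⨭ (∻a ⨭ a) = (∻a ⨭ a) ⨭ (a ⨭ ∻a) :=
    (addSg S).idem_comm ((addSg S).op_iv_idem a) ((addSg S).iv_op_idem a)
  rw [← h1, hcomm, h2]

/-- Additive idempotents are central. -/
lemma bcentral_add {e : S} (he : e ⨭ e = e) (a : S) : e ⨭ a = a ⨭ e :=
  (addSg S).central bC he a

/-- Multiplicative idempotents are central. -/
lemma bcentral_mul {e : S} (he : e ⨰ e = e) (a : S) : e ⨰ a = a ⨰ e :=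
  (mulSg S).central DualWeakBrace.clifford he a

/-- For an additive idempotent `e` : `e + e∘d = e∘d`. -/
lemma babs (e : S) (he : e ⨭ e = e) (d : S) : e ⨭ e ⨰ d = e ⨰ d := by
  have := bK e d
  rw [bneg_idem he, he] at this
  exact this

/-- Lemma K2 : `(b - b) + a∘b = a∘b` and on the right. -/
lemma bK2 (a b : S) : (b ⨭ ∻b) ⨭ a ⨰ b = a ⨰ b := by
  set e := b ⨭ ∻b with hedef
  have he_add : e ⨭ e = e := (addSg S).op_iv_idem b
  have he_mul : e ⨰ e = e := by
    have h1 : e = b ⨰ bᘁ := by rw [hedef, bC, WeakBrace.link]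
    rw [h1]; exact (mulSg S).op_iv_idem b
  set u := a ⨰ b with hu
  -- step1 : a⨰e ⨭ e = a⨰e
  have step1 : a ⨰ e ⨭ e = a ⨰ e := by
    rw [← bcentral_mul he_mul a, ← bcentral_add he_add (e ⨰ a)]
    exact babs e he_add a
  -- step2 : u ⨭ ∻u = a⨰e ⨭ ∻a
  have step2 : u ⨭ ∻u = a ⨰ e ⨭ ∻a := by
    rw [bN a b, hedef, WeakBrace.distrib]
    simp only [WeakBrace.add_assoc, hu]
  -- step3 : (u ⨭ ∻u) ⨭ e = u ⨭ ∻u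
  have step3 : (u ⨭ ∻u) ⨭ e = u ⨭ ∻u := by
    rw [step2, WeakBrace.add_assoc, ← bcentral_add he_add (∻a), ← WeakBrace.add_assoc,
      step1]
  -- final : e ⨭ u = u
  have hcomm : e ⨭ (u ⨭ ∻u) = (u ⨭ ∻u) ⨭ e := bcentral_add he_add (u ⨭ ∻u)
  calc e ⨭ u = e ⨭ ((u ⨭ ∻u) ⨭ u) := by rw [WeakBrace.add_reg]
    _ = (e ⨭ (u ⨭ ∻u)) ⨭ u := (WeakBrace.add_assoc e (u ⨭ ∻u) u).symm
    _ = ((u ⨭ ∻u) ⨭ e) ⨭ u := by rw [hcomm]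
    _ = (u ⨭ ∻u) ⨭ u := by rw [step3]
    _ = u := WeakBrace.add_reg u

lemma bK2r (a b : S) : a ⨰ b ⨭ (b ⨭ ∻b) = a ⨰ b := by
  rw [← bcentral_add (baddidem b) (a ⨰ b)]
  exact bK2 a b

/-- `x·b + b = λ_x(b)`. -/
lemma bB9 (x b : S) : cdot x b ⨭ b = lam x b := by
  show ((∻x ⨭ x ⨰ b) ⨭ ∻b) ⨭ b = ∻x ⨭ x ⨰ b
  rw [WeakBrace.add_assoc, WeakBrace.add_assoc]
  -- ∻x ⨭ (x⨰b ⨭ (∻b ⨭ b)) ; reduce x⨰b ⨭ (∻b ⨭ b) = x⨰b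
  have : x ⨰ b ⨭ (∻b ⨭ b) = x ⨰ b := by rw [← bC]; exact bK2r x b
  rw [this]

/-- `x ∘ a = (x + x·a) + a`. -/
lemma bB10 (x a : S) : x ⨰ a = (x ⨭ cdot x a) ⨭ a := by
  have h1 : x ⨭ lam x a = x ⨰ a := by
    show x ⨭ (∻x ⨭ x ⨰ a) = x ⨰ a
    rw [← WeakBrace.add_assoc]; exact bK x a
  rw [WeakBrace.add_assoc, bB9, h1]

lemma baddidem' (a : S) : (∻a ⨭ a) ⨭ (∻a ⨭ a) = ∻a ⨭ a := (addSg S).iv_op_idem a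

lemma bmulidem (a : S) : (a ⨰ aᘁ) ⨰ (a ⨰ aᘁ) = a ⨰ aᘁ := (mulSg S).op_iv_idem a

/-- `a + λ_a(b) = a ∘ b`. -/
lemma bKadd (a b : S) : a ⨭ lam a b = a ⨰ b := by
  show a ⨭ (∻a ⨭ a ⨰ b) = a ⨰ b
  rw [← WeakBrace.add_assoc]; exact bK a b

/-- `x ∘ a = a ∘ (a⁻ ∘ x ∘ a)`. -/
lemma bconj_mul (x a : S) : x ⨰ a = a ⨰ ((aᘁ ⨰ x) ⨰ a) := by
  rw [WeakBrace.mul_assoc (aᘁ) x a, ← WeakBrace.mul_assoc a (aᘁ) (x ⨰ a)]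
  have h1 : (a ⨰ aᘁ) ⨰ (x ⨰ a) = x ⨰ a := by
    rw [← WeakBrace.mul_assoc, bcentral_mul (bmulidem a) x, WeakBrace.mul_assoc,
      WeakBrace.mul_reg]
  rw [h1]

/-- `-x + (-x + x) = -x`. -/
lemma bred (x : S) : ∻x ⨭ (∻x ⨭ x) = ∻x := by
  rw [← bC x, ← WeakBrace.add_assoc, WeakBrace.neg_reg]

/-- `x⁻ + (x - x) = x⁻`. -/
lemma babs2 (x : S) : xᘁ ⨭ (x ⨭ ∻x) = xᘁ := by
  rw [bC, ← WeakBrace.link, DualWeakBrace.clifford, blink2, ← WeakBrace.add_assoc,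
    WeakBrace.add_reg]

end Brace

open WeakBrace
theorem stmt13 {S : Type*} [DualWeakBrace S] (I : Set S) (hI : IsNormalAdd I) :
    (IsIdeal I ↔ ∀ a : S, ∀ x ∈ I, cdot x a ∈ I ∧ lam a x ∈ I) ∧
    (IsIdeal I → ∀ a : S, ∀ x ∈ I, mul (mul a x) (inv a) ∈ I) := by
  obtain ⟨⟨hIdem, hAdd, hNeg⟩, hConj⟩ := id hI
  constructor
  · constructor
    · rintro ⟨hNA, hLam, hE, hMC, hInvC, hMConj⟩
      intro a x hx
      refine ⟨?_, hLam a x hx⟩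
      have hy : mul (mul (inv a) x) a ∈ I := hMConj a x hx
      have hz : lam a (mul (mul (inv a) x) a) ∈ I := hLam _ _ hy
      have hp : add (add a (lam a (mul (mul (inv a) x) a))) (neg a) ∈ I := by
        have := hConj (neg a) _ hz; rwa [bneg_neg] at this
      have hmem := hAdd _ (hNeg x hx) _ hp
      have heq : cdot x a
          = add (neg x) (add (add a (lam a (mul (mul (inv a) x) a))) (neg a)) := by
        show add (add (neg x) (mul x a)) (neg a) = _
        rw [bconj_mul x a, ← bKadd a (mul (mul (inv a) x) a), WeakBrace.add_assoc]
      rwa [heq]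
    · intro H
      refine ⟨hI, fun a x hx => (H a x hx).2, hIdem, ?_, ?_, ?_⟩
      · -- closure under ∘
        intro x hx y hy
        rw [← bKadd x y]
        exact hAdd x hx _ ((H x y hy).2)
      · -- closure under inv
        intro x hx
        have hm : cdot x (inv x) ∈ I := (H (inv x) x hx).1
        have hmeq : cdot x (inv x) = add (neg x) (neg (inv x)) := by
          show add (add (neg x) (mul x (inv x))) (neg (inv x)) = _
          rw [WeakBrace.link, bred]
        rw [hmeq] at hm
        have hn := hNeg _ hm
        rw [bneg_add, bneg_neg, bneg_neg] at hn
        have hw : add (add (inv x) x) (neg x) ∈ I := hAdd _ hn _ (hNeg x hx)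
        rwa [WeakBrace.add_assoc, babs2] at hw
      · -- closure under conjugation
        intro a x hx
        have hj : add x (cdot x a) ∈ I := hAdd x hx _ ((H a x hx).1)
        have hz : lam (inv a) (add x (cdot x a)) ∈ I := (H (inv a) _ hj).2
        have hp : add (add (inv a) (lam (inv a) (add x (cdot x a)))) (neg (inv a)) ∈ I := by
          have := hConj (neg (inv a)) _ hz; rwa [bneg_neg] at this
        have hmem := hAdd _ hp _ (hIdem _ (baddidem' (inv a)))
        have heq : mul (mul (inv a) x) a
            = add (add (add (inv a) (lam (inv a) (add x (cdot x a)))) (neg (inv a)))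
                (add (neg (inv a)) (inv a)) := by
          rw [WeakBrace.mul_assoc, bB10 x a, WeakBrace.distrib,
            ← bKadd (inv a) (add x (cdot x a)), blink2]
        rwa [heq]
  · rintro ⟨-, -, -, -, -, hMConj⟩ a x hx
    have := hMConj (inv a) x hx
    rwa [binv_inv] at this
end

section
/- In a dual weak brace S, a normal subsemigroup I of (S,+) is an ideal of S if and only if a · x ∈ I and x · a ∈ I for all a ∈ S and x ∈ I, where a · b := -a + a ∘ b - b. -/
structure ISG14 (T : Type*) where
  op : T → T → T
  iv : T → T
  assoc : ∀ a b c, op (op a b) c = op a (op b c)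
  reg1 : ∀ a, op (op a (iv a)) a = a
  reg2 : ∀ a, op (op (iv a) a) (iv a) = iv a
  uniq : ∀ a x, op (op a x) a = a → op (op x a) x = x → x = iv a

namespace ISG14

variable {T : Type*} (G : ISG14 T)

lemma iv_iv (a : T) : G.iv (G.iv a) = a :=
  (G.uniq (G.iv a) a (G.reg2 a) (G.reg1 a)).symm

lemma iv_idem {e : T} (he : G.op e e = e) : G.iv e = e :=
  (G.uniq e e (by rw [he, he]) (by rw [he, he])).symm

lemma opc {e : T} (he : G.op e e = e) : ∀ x, G.op e (G.op e x) = G.op e x :=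
  fun x => by rw [← G.assoc, he]

lemma reg1' (a : T) : G.op a (G.op (G.iv a) a) = a := by rw [← G.assoc]; exact G.reg1 a

lemma reg2' (a : T) : G.op (G.iv a) (G.op a (G.iv a)) = G.iv a := by
  rw [← G.assoc]; exact G.reg2 a

lemma idem1 (a : T) : G.op (G.op a (G.iv a)) (G.op a (G.iv a)) = G.op a (G.iv a) := by
  simp only [G.assoc]
  have h := G.reg2 a
  simp only [G.assoc] at h
  rw [h]

lemma idem2 (a : T) : G.op (G.op (G.iv a) a) (G.op (G.iv a) a) = G.op (G.iv a) a := by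
  simp only [G.assoc]
  have h := G.reg1 a
  simp only [G.assoc] at h
  rw [h]

lemma idem_op {e f : T} (he : G.op e e = e) (hf : G.op f f = f) :
    G.op (G.op e f) (G.op e f) = G.op e f := by
  set a := G.iv (G.op e f) with ha
  have h₁ : G.op (G.op (G.op e f) (G.op (G.op f a) e)) (G.op e f) = G.op e f := by
    have h := G.reg1 (G.op e f)
    rw [← ha] at h
    simp only [G.assoc] at h ⊢
    rw [G.opc hf, G.opc he]
    exact h
  have hmid : G.op a (G.op e (G.op f (G.op a e))) = G.op a e := by
    have h := congrArg (fun y => G.op y e) (G.reg2 (G.op e f))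
    rw [← ha] at h
    simp only [G.assoc] at h
    exact h
  have h₂ : G.op (G.op (G.op (G.op f a) e) (G.op e f)) (G.op (G.op f a) e) =
      G.op (G.op f a) e := by
    simp only [G.assoc]
    rw [G.opc he, G.opc hf, hmid]
  have hx : G.op (G.op f a) e = a := G.uniq _ _ h₁ h₂
  have hxx : G.op f (G.op a e) = a := by
    have := hx
    simp only [G.assoc] at this
    exact this
  have haa : G.op a a = a := by
    conv_lhs => rw [← hx]
    simp only [G.assoc]
    rw [hmid]
    exact hxx
  have hg : G.op e f = G.iv a := by
    refine G.uniq a (G.op e f) ?_ ?_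
    · rw [ha]; exact G.reg2 (G.op e f)
    · rw [ha]; exact G.reg1 (G.op e f)
  rw [hg, G.iv_idem haa]
  exact haa

lemma idem_comm {e f : T} (he : G.op e e = e) (hf : G.op f f = f) :
    G.op e f = G.op f e := by
  have hef := G.idem_op he hf
  have hfe := G.idem_op hf he
  have h₁ : G.op (G.op (G.op e f) (G.op f e)) (G.op e f) = G.op e f := by
    have h' := hef
    simp only [G.assoc] at h'
    simp only [G.assoc]
    rw [G.opc hf, G.opc he, h']
  have h₂ : G.op (G.op (G.op f e) (G.op e f)) (G.op f e) = G.op f e := by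
    have h' := hfe
    simp only [G.assoc] at h'
    simp only [G.assoc]
    rw [G.opc he, G.opc hf, h']
  have := G.uniq (G.op e f) (G.op f e) h₁ h₂
  rw [G.iv_idem hef] at this
  exact this.symm

lemma swap_mid {p q : T} (hp : G.op p p = p) (hq : G.op q q = q) (x : T) :
    G.op p (G.op q x) = G.op q (G.op p x) := by
  rw [← G.assoc, G.idem_comm hp hq, G.assoc]

lemma iv_op (a b : T) : G.iv (G.op a b) = G.op (G.iv b) (G.iv a) := by
  have h₁ : G.op (G.op (G.op a b) (G.op (G.iv b) (G.iv a))) (G.op a b) = G.op a b := by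
    calc G.op (G.op (G.op a b) (G.op (G.iv b) (G.iv a))) (G.op a b)
        = G.op a (G.op (G.op b (G.iv b)) (G.op (G.op (G.iv a) a) b)) := by
          simp only [G.assoc]
      _ = G.op a (G.op (G.op (G.iv a) a) (G.op (G.op b (G.iv b)) b)) := by
          rw [G.swap_mid (G.idem1 b) (G.idem2 a)]
      _ = G.op a b := by rw [G.reg1 b, ← G.assoc, G.reg1' a]
  have h₂ : G.op (G.op (G.op (G.iv b) (G.iv a)) (G.op a b)) (G.op (G.iv b) (G.iv a)) =
      G.op (G.iv b) (G.iv a) := by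
    calc G.op (G.op (G.op (G.iv b) (G.iv a)) (G.op a b)) (G.op (G.iv b) (G.iv a))
        = G.op (G.iv b) (G.op (G.op (G.iv a) a) (G.op (G.op b (G.iv b)) (G.iv a))) := by
          simp only [G.assoc]
      _ = G.op (G.iv b) (G.op (G.op b (G.iv b)) (G.op (G.op (G.iv a) a) (G.iv a))) := by
          rw [G.swap_mid (G.idem2 a) (G.idem1 b)]
      _ = G.op (G.iv b) (G.iv a) := by rw [G.reg2 a, ← G.assoc, G.reg2' b]
  exact (G.uniq _ _ h₁ h₂).symm

end ISG14

namespace WB14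

open WeakBrace

variable {S : Type*}

def addG (S : Type*) [WeakBrace S] : ISG14 S :=
  ⟨WeakBrace.add, WeakBrace.neg, WeakBrace.add_assoc, WeakBrace.add_reg,
    WeakBrace.neg_reg, WeakBrace.neg_unique⟩

def mulG (S : Type*) [WeakBrace S] : ISG14 S :=
  ⟨WeakBrace.mul, WeakBrace.inv, WeakBrace.mul_assoc, WeakBrace.mul_reg,
    WeakBrace.inv_reg, WeakBrace.inv_unique⟩

section WB
variable [WeakBrace S]

lemma addA (a b c : S) : add (add a b) c = add a (add b c) := WeakBrace.add_assoc a b c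
lemma mulA (a b c : S) : mul (mul a b) c = mul a (mul b c) := WeakBrace.mul_assoc a b c
lemma addR (a : S) : add (add a (neg a)) a = a := WeakBrace.add_reg a
lemma negR (a : S) : add (add (neg a) a) (neg a) = neg a := WeakBrace.neg_reg a
lemma mulR (a : S) : mul (mul a (inv a)) a = a := WeakBrace.mul_reg a
lemma invR (a : S) : mul (mul (inv a) a) (inv a) = inv a := WeakBrace.inv_reg a

lemma negneg (a : S) : neg (neg a) = a := ISG14.iv_iv (addG S) a
lemma invinv (a : S) : inv (inv a) = a := ISG14.iv_iv (mulG S) a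
lemma neg_idem {e : S} (he : add e e = e) : neg e = e := ISG14.iv_idem (addG S) he
lemma inv_idem {e : S} (he : mul e e = e) : inv e = e := ISG14.iv_idem (mulG S) he
lemma add_comm_idem {e f : S} (he : add e e = e) (hf : add f f = f) :
    add e f = add f e := ISG14.idem_comm (addG S) he hf
lemma mul_comm_idem {e f : S} (he : mul e e = e) (hf : mul f f = f) :
    mul e f = mul f e := ISG14.idem_comm (mulG S) he hf
lemma swap_mid_add {p q : S} (hp : add p p = p) (hq : add q q = q) (x : S) :
    add p (add q x) = add q (add p x) := ISG14.swap_mid (addG S) hp hq x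
lemma neg_add_rev (a b : S) : neg (add a b) = add (neg b) (neg a) := ISG14.iv_op (addG S) a b
lemma inv_mul_rev (a b : S) : inv (mul a b) = mul (inv b) (inv a) := ISG14.iv_op (mulG S) a b
lemma add_idem_ctx {e : S} (he : add e e = e) (x : S) : add e (add e x) = add e x :=
  ISG14.opc (addG S) he x
lemma mul_idem_ctx {e : S} (he : mul e e = e) (x : S) : mul e (mul e x) = mul e x :=
  ISG14.opc (mulG S) he x
lemma idem_en (a : S) : add (add a (neg a)) (add a (neg a)) = add a (neg a) :=
  ISG14.idem1 (addG S) a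
lemma idem_ne (a : S) : add (add (neg a) a) (add (neg a) a) = add (neg a) a :=
  ISG14.idem2 (addG S) a
lemma idem_mul_inv (a : S) : mul (mul a (inv a)) (mul a (inv a)) = mul a (inv a) :=
  ISG14.idem1 (mulG S) a
lemma idem_inv_mul (a : S) : mul (mul (inv a) a) (mul (inv a) a) = mul (inv a) a :=
  ISG14.idem2 (mulG S) a
lemma ar' (a : S) : add a (add (neg a) a) = a := ISG14.reg1' (addG S) a
lemma mulR' (a : S) : mul a (mul (inv a) a) = a := ISG14.reg1' (mulG S) a

/-- λ is additive on the second argument (raw form). -/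
lemma lam_add_raw (a b c : S) :
    add (add (neg a) (mul a b)) (add (neg a) (mul a c)) = add (neg a) (mul a (add b c)) := by
  rw [WeakBrace.distrib]
  simp only [addA]

/-- `λ_a(-b) = -(a∘b) + a` (raw form). -/
lemma lamN (a b : S) : add (neg a) (mul a (neg b)) = add (neg (mul a b)) a := by
  have h₁ : add (add (add (neg a) (mul a b)) (add (neg a) (mul a (neg b))))
      (add (neg a) (mul a b)) = add (neg a) (mul a b) := by
    rw [lam_add_raw, lam_add_raw, addR]
  have h₂ : add (add (add (neg a) (mul a (neg b))) (add (neg a) (mul a b)))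
      (add (neg a) (mul a (neg b))) = add (neg a) (mul a (neg b)) := by
    rw [lam_add_raw, lam_add_raw, negR]
  have h := WeakBrace.neg_unique _ _ h₁ h₂
  rw [neg_add_rev, negneg] at h
  exact h

/-- `a∘(b - b) = a∘b - a∘b + a`. -/
lemma star (a b : S) : mul a (add b (neg b)) = add (mul a b) (add (neg (mul a b)) a) := by
  rw [WeakBrace.distrib, addA, lamN]

/-- `a⁰ + a∘b = a∘b`  (raw L1). -/
lemma sq_mul_abs (a b : S) : add (add a (neg a)) (mul a b) = mul a b := by
  have h0 : mul a b = mul a (add (add b (neg b)) b) := by rw [addR]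
  rw [WeakBrace.distrib, star] at h0
  generalize hs : mul a b = s at h0 ⊢
  have h1 : add s (neg s) = add (add s (neg s)) (add (add a (neg a)) (add s (neg s))) := by
    nth_rewrite 1 [h0]
    simp only [addA]
  have h2 : add s (neg s) = add (add a (neg a)) (add s (neg s)) := by
    nth_rewrite 1 [h1]
    rw [swap_mid_add (idem_en s) (idem_en a), idem_en s]
  nth_rewrite 1 [← addR s]
  rw [← addA, ← h2, addR]

/-- `a + λ_a(b) = a∘b` (raw). -/
lemma add_lam_raw (a b : S) : add a (add (neg a) (mul a b)) = mul a b := by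
  rw [← addA, sq_mul_abs]

lemma add_lam (a b : S) : add a (lam a b) = mul a b := add_lam_raw a b

/-- `a∘(-b) = a - a∘b + a`. -/
lemma mul_neg (a b : S) : mul a (neg b) = add a (add (neg (mul a b)) a) := by
  rw [← add_lam_raw a (neg b), lamN]

/-- `(S,+)` is Clifford. -/
lemma cplus (a : S) : add a (neg a) = add (neg a) a := by
  have F : ∀ s : S, add (add s (neg s)) (add (neg s) s) = add (neg s) s := fun s => by
    have h := sq_mul_abs s (inv s)
    rw [WeakBrace.link] at h
    exact h
  have Fa := F a
  have Fna := F (neg a)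
  rw [negneg] at Fna
  calc add a (neg a) = add (add (neg a) a) (add a (neg a)) := Fna.symm
    _ = add (add a (neg a)) (add (neg a) a) := (add_comm_idem (idem_en a) (idem_ne a)).symm
    _ = add (neg a) a := Fa

/-- `a∘b + (-a + a) = a∘b` (star3). -/
lemma mul_add_e (a b : S) : add (mul a b) (add (neg a) a) = mul a b := by
  have h : mul a b = mul a (add b (add (neg b) b)) := by rw [← addA, addR]
  rw [WeakBrace.distrib, WeakBrace.distrib, mul_neg] at h
  simp only [addA] at h
  rw [add_lam_raw] at h
  have h' : mul a b = add (mul a b)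
      (add (add (neg a) a) (add (neg (mul a b)) (mul a b))) := by
    conv_lhs => rw [h]
    simp only [addA]
  calc add (mul a b) (add (neg a) a)
      = add (add (mul a b) (add (add (neg a) a) (add (neg (mul a b)) (mul a b))))
        (add (neg a) a) := by conv_lhs => rw [h']
    _ = add (mul a b) (add (add (neg a) a)
        (add (add (neg (mul a b)) (mul a b)) (add (neg a) a))) := by simp only [addA]
    _ = add (mul a b) (add (add (neg a) a)
        (add (add (neg a) a) (add (neg (mul a b)) (mul a b)))) := by
        rw [add_comm_idem (idem_ne (mul a b)) (idem_ne a)]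
    _ = add (mul a b) (add (add (neg a) a) (add (neg (mul a b)) (mul a b))) := by
        rw [add_idem_ctx (idem_ne a)]
    _ = mul a b := h'.symm

/-- `(-a + a) + (-(a∘b)) = -(a∘b)`. -/
lemma e_neg_mul (a b : S) : add (add (neg a) a) (neg (mul a b)) = neg (mul a b) := by
  have h := congrArg neg (mul_add_e a b)
  rw [neg_add_rev, neg_idem (idem_ne a)] at h
  exact h

end WB

section DWB
variable [DualWeakBrace S]

lemma link' (a : S) : mul (inv a) a = add (neg a) a := by
  rw [← DualWeakBrace.clifford, WeakBrace.link]

/-- Idempotents are central in `(S,∘)`. -/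
lemma cent {e : S} (he : mul e e = e) (a : S) : mul a e = mul e a := by
  have hie : inv e = e := inv_idem he
  have hca := DualWeakBrace.clifford (mul a e)
  rw [inv_mul_rev, hie] at hca
  have h1 : mul (mul a e) (inv a) = mul (mul a e) (mul e (inv a)) := by
    simp only [mulA]
    rw [mul_idem_ctx he]
  have h2 : mul (mul e (inv a)) (mul a e) = mul (mul (inv a) a) e := by
    calc mul (mul e (inv a)) (mul a e) = mul (mul e (mul (inv a) a)) e := by
          simp only [mulA]
      _ = mul (mul (mul (inv a) a) e) e := by rw [mul_comm_idem he (idem_inv_mul a)]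
      _ = mul (mul (inv a) a) e := by rw [mulA, he]
  have hA : mul (mul (mul a e) (inv a)) a = mul (mul (mul (inv a) a) e) a := by
    rw [h1, hca, h2]
  have hL : mul (mul (mul a e) (inv a)) a = mul a e := by
    calc mul (mul (mul a e) (inv a)) a = mul a (mul e (mul (inv a) a)) := by
          simp only [mulA]
      _ = mul a (mul (mul (inv a) a) e) := by rw [mul_comm_idem he (idem_inv_mul a)]
      _ = mul (mul (mul a (inv a)) a) e := by simp only [mulA]
      _ = mul a e := by rw [mulR]
  have hR : mul (mul (mul (inv a) a) e) a = mul e a := by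
    calc mul (mul (mul (inv a) a) e) a = mul (mul (mul a (inv a)) e) a := by
          rw [← DualWeakBrace.clifford]
      _ = mul (mul e (mul a (inv a))) a := by rw [mul_comm_idem (idem_mul_inv a) he]
      _ = mul e (mul (mul a (inv a)) a) := by simp only [mulA]
      _ = mul e a := by rw [mulR]
  exact hL.symm.trans (hA.trans hR)

/-- `a∘b + (-b + b) = a∘b`  (L2). -/
lemma mul_add_eb (a b : S) : add (mul a b) (add (neg b) b) = mul a b := by
  have hf : add (neg (mul a b)) (mul a b) = mul (add (neg b) b) (mul a (inv a)) := by
    calc add (neg (mul a b)) (mul a b) = mul (mul a b) (inv (mul a b)) :=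
          (WeakBrace.link (mul a b)).symm
      _ = mul (mul a b) (mul (inv b) (inv a)) := by rw [inv_mul_rev]
      _ = mul (mul a (mul b (inv b))) (inv a) := by simp only [mulA]
      _ = mul (mul (mul b (inv b)) a) (inv a) := by rw [cent (idem_mul_inv b) a]
      _ = mul (mul b (inv b)) (mul a (inv a)) := by rw [mulA]
      _ = mul (add (neg b) b) (mul a (inv a)) := by rw [WeakBrace.link]
  have h3 : add (mul (add (neg b) b) (mul a (inv a))) (add (neg b) b) =
      mul (add (neg b) b) (mul a (inv a)) := by
    have h := mul_add_e (add (neg b) b) (mul a (inv a))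
    rw [neg_idem (idem_ne b), idem_ne b] at h
    exact h
  nth_rewrite 1 [← ar' (mul a b)]
  rw [addA, hf, h3, ← hf, ar']

/-- `a·b + b = λ_a(b)`. -/
lemma cdot_add (a b : S) : add (cdot a b) b = lam a b := by
  show add (add (add (neg a) (mul a b)) (neg b)) b = add (neg a) (mul a b)
  simp only [addA]
  rw [mul_add_eb]

lemma e_inv (x : S) : add (neg (inv x)) (inv x) = add (neg x) x := by
  have h := WeakBrace.link (inv x)
  rw [invinv, ← DualWeakBrace.clifford, WeakBrace.link] at h
  exact h.symm

lemma e_negInv (x : S) : add (add (neg x) x) (neg (inv x)) = neg (inv x) := by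
  rw [← e_inv, negR]

lemma cdot_inv (x : S) : cdot x (inv x) = add (neg x) (neg (inv x)) := by
  show add (add (neg x) (mul x (inv x))) (neg (inv x)) = add (neg x) (neg (inv x))
  rw [WeakBrace.link, addA, e_negInv]

end DWB
end WB14

open WeakBrace
theorem stmt14 {S : Type*} [DualWeakBrace S] (I : Set S) (hI : IsNormalAdd I) :
    IsIdeal I ↔ ∀ a : S, ∀ x ∈ I, cdot a x ∈ I ∧ cdot x a ∈ I := by
  constructor
  · rintro ⟨hN, hL, hM⟩
    intro a x hx
    refine ⟨?_, ?_⟩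
    · exact hN.1.2.1 _ (hL a x hx) _ (hN.1.2.2 x hx)
    · have hyI : mul (mul (inv a) x) a ∈ I := hM.2.2.2 a x hx
      have h1 : mul a (mul (mul (inv a) x) a) = mul x a := by
        calc mul a (mul (mul (inv a) x) a)
            = mul (mul (mul a (inv a)) x) a := by simp only [WB14.mulA]
          _ = mul (mul x (mul a (inv a))) a := by
              rw [← WB14.cent (WB14.idem_mul_inv a) x]
          _ = mul x (mul a (mul (inv a) a)) := by simp only [WB14.mulA]
          _ = mul x a := by rw [WB14.mulR']
      have hE : mul x a = add a (add (neg a) (mul a (mul (mul (inv a) x) a))) := by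
        rw [WB14.add_lam_raw]
        exact h1.symm
      show add (add (neg x) (mul x a)) (neg a) ∈ I
      rw [hE, WB14.addA]
      refine hN.1.2.1 _ (hN.1.2.2 x hx) _ ?_
      have hz := hN.2 (neg a) _ (hL a (mul (mul (inv a) x) a) hyI)
      rw [WB14.negneg] at hz
      exact hz
  · intro H
    have hLam : ∀ a : S, ∀ x ∈ I, lam a x ∈ I := by
      intro a x hx
      have h := hI.1.2.1 _ (H a x hx).1 _ hx
      rw [WB14.cdot_add] at h
      exact h
    refine ⟨hI, hLam, hI.1.1, ?_, ?_, ?_⟩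
    · intro x hx y hy
      have h1 : add x (lam x y) ∈ I := hI.1.2.1 x hx _ (hLam x y hy)
      rw [WB14.add_lam] at h1
      exact h1
    · intro x hx
      have ht : cdot x (inv x) ∈ I := (H (inv x) x hx).2
      rw [WB14.cdot_inv] at ht
      have ht2 := hI.1.2.2 _ ht
      rw [WB14.neg_add_rev, WB14.negneg, WB14.negneg] at ht2
      have ht3 : add (add (inv x) x) (neg x) ∈ I := hI.1.2.1 _ ht2 _ (hI.1.2.2 x hx)
      have key : add (add (inv x) x) (neg x) = inv x := by
        calc add (add (inv x) x) (neg x) = add (inv x) (add x (neg x)) := by rw [WB14.addA]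
          _ = add (inv x) (add (neg x) x) := by rw [WB14.cplus]
          _ = add (inv x) (add (neg (inv x)) (inv x)) := by rw [← WB14.e_inv]
          _ = inv x := WB14.ar' (inv x)
      rwa [key] at ht3
    · intro a x hx
      have hm1 : cdot x a ∈ I := (H a x hx).2
      have hu : lam (inv a) x ∈ I := hLam (inv a) x hx
      have hu1 : lam (inv a) (cdot x a) ∈ I := hLam (inv a) _ hm1
      have hEI : add (neg (inv a)) (inv a) ∈ I := hI.1.1 _ (WB14.idem_ne (inv a))
      have heI : add (neg a) a ∈ I := hI.1.1 _ (WB14.idem_ne a)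
      have hmI : add (lam (inv a) x)
          (add (add (neg (inv a)) (inv a)) (lam (inv a) (cdot x a))) ∈ I :=
        hI.1.2.1 _ hu _ (hI.1.2.1 _ hEI _ hu1)
      have hzI : add (add (inv a) (add (lam (inv a) x)
          (add (add (neg (inv a)) (inv a)) (lam (inv a) (cdot x a))))) (neg (inv a)) ∈ I := by
        have h := hI.2 (neg (inv a)) _ hmI
        rw [WB14.negneg] at h
        exact h
      have E1 : mul x a = add x (add (cdot x a) a) := by
        rw [← WB14.add_lam x a, ← WB14.cdot_add x a]
      have hwz : mul (mul (inv a) x) a =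
          add (add (add (inv a) (add (lam (inv a) x)
            (add (add (neg (inv a)) (inv a)) (lam (inv a) (cdot x a))))) (neg (inv a)))
            (add (neg a) a) := by
        calc mul (mul (inv a) x) a = mul (inv a) (mul x a) := WB14.mulA _ _ _
          _ = mul (inv a) (add x (add (cdot x a) a)) := by rw [E1]
          _ = add (add (mul (inv a) x) (neg (inv a))) (mul (inv a) (add (cdot x a) a)) :=
              WeakBrace.distrib _ _ _
          _ = add (add (mul (inv a) x) (neg (inv a)))
              (add (add (mul (inv a) (cdot x a)) (neg (inv a))) (mul (inv a) a)) := by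
              rw [WeakBrace.distrib]
          _ = add (add (add (inv a) (lam (inv a) x)) (neg (inv a)))
              (add (add (add (inv a) (lam (inv a) (cdot x a))) (neg (inv a)))
                (add (neg a) a)) := by
              rw [← WB14.add_lam (inv a) x, ← WB14.add_lam (inv a) (cdot x a), WB14.link']
          _ = _ := by simp only [WB14.addA]
      rw [hwz]
      exact hI.1.2.1 _ hzI _ heI
end

section
/- In a dual weak brace S, the annihilator Ann(S) = {a ∈ S : a + b = b + a = a ∘ b = b ∘ a for all b ∈ S} is an ideal of S: it contains E(S), is a normal subsemigroup of both (S,+) and (S,∘), and is λ-invariant. -/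
set_option linter.unusedSectionVars false

section Generic

variable {T : Type*} (p : T → T → T) (n : T → T)
variable (hA : ∀ a b c : T, p (p a b) c = p a (p b c))
variable (hR : ∀ a : T, p (p a (n a)) a = a)
variable (hNR : ∀ a : T, p (p (n a) a) (n a) = n a)
variable (hU : ∀ a x : T, p (p a x) a = a → p (p x a) x = x → x = n a)

include hA hR hNR hU

lemma gen_nn (a : T) : n (n a) = a :=
  (hU (n a) a (hNR a) (hR a)).symm

lemma gen_nidem (e : T) (he : p e e = e) : n e = e :=
  (hU e e (by rw [he, he]) (by rw [he, he])).symm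

lemma gen_idem_bn (a : T) : p (p a (n a)) (p a (n a)) = p a (n a) := by
  rw [← hA, hR]

lemma gen_idem_nb (a : T) : p (p (n a) a) (p (n a) a) = p (n a) a := by
  rw [← hA, hNR]

lemma gen_prod_idem (e f : T) (he : p e e = e) (hf : p f f = f) :
    p (p e f) (p e f) = p e f := by
  set x := n (p e f) with hx
  have heZ : ∀ z, p e (p e z) = p e z := fun z => by rw [← hA, he]
  have hfZ : ∀ z, p f (p f z) = p f z := fun z => by rw [← hA, hf]
  have hxef : p x (p e (p f x)) = x := by
    have h := hNR (p e f); rw [← hx] at h; simpa only [hA] using h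
  have hxefZ : ∀ z, p x (p e (p f (p x z))) = p x z := fun z => by
    have h := congrArg (fun w => p w z) hxef
    simpa only [hA] using h
  have hefx : p e (p f (p x (p e f))) = p e f := by
    have h := hR (p e f); rw [← hx] at h; simpa only [hA] using h
  -- g := f x e is the inverse of (e f)
  have hg : p f (p x e) = x := by
    have h1 : p (p (p e f) (p f (p x e))) (p e f) = p e f := by
      simp only [hA]
      rw [hfZ, heZ, hefx]
    have h2 : p (p (p f (p x e)) (p e f)) (p f (p x e)) = p f (p x e) := by
      simp only [hA]
      rw [heZ, hfZ, hxefZ]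
    have := hU (p e f) (p f (p x e)) h1 h2
    rw [← hx] at this; exact this
  -- x is idempotent
  have hxx : p x x = x := by
    conv_lhs => rw [← hg]
    simp only [hA]
    rw [hxefZ, hg]
  -- e f = n x = x
  have hefnx : p e f = n x := by
    refine hU x (p e f) ?_ ?_
    · have h := hNR (p e f); rw [← hx] at h; exact h
    · have h := hR (p e f); rw [← hx] at h; exact h
  rw [hefnx, gen_nidem p n hA hR hNR hU x hxx, hxx]

lemma gen_comm (e f : T) (he : p e e = e) (hf : p f f = f) : p e f = p f e := by
  have h1 := gen_prod_idem p n hA hR hNR hU e f he hf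
  have h2 := gen_prod_idem p n hA hR hNR hU f e hf he
  have heZ : ∀ z, p e (p e z) = p e z := fun z => by rw [← hA, he]
  have hfZ : ∀ z, p f (p f z) = p f z := fun z => by rw [← hA, hf]
  have h1' : p e (p f (p e f)) = p e f := by simpa only [hA] using h1
  have h2' : p f (p e (p f e)) = p f e := by simpa only [hA] using h2
  have key : p f e = n (p e f) := by
    refine hU (p e f) (p f e) ?_ ?_
    · simp only [hA]
      rw [hfZ, heZ, h1']
    · simp only [hA]
      rw [heZ, hfZ, h2']
  rw [key, gen_nidem p n hA hR hNR hU (p e f) h1]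

lemma gen_nop (a b : T) : n (p a b) = p (n b) (n a) := by
  have hbn : p (p b (n b)) (p b (n b)) = p b (n b) := gen_idem_bn p n hA hR hNR hU b
  have hna : p (p (n a) a) (p (n a) a) = p (n a) a := gen_idem_nb p n hA hR hNR hU a
  have hcomm := gen_comm p n hA hR hNR hU (p b (n b)) (p (n a) a) hbn hna
  refine (hU (p a b) (p (n b) (n a)) ?_ ?_).symm
  · have step1 : p (p (p a b) (p (n b) (n a))) (p a b)
        = p (p a (p (p b (n b)) (p (n a) a))) b := by simp only [hA]
    rw [step1, hcomm]
    have hRZ : ∀ z, p a (p (n a) (p a z)) = p a z := fun z => by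
      have h := congrArg (fun w => p w z) (hR a); simpa only [hA] using h
    have hR' : p b (p (n b) b) = b := by simpa only [hA] using hR b
    simp only [hA]
    rw [hRZ, hR']
  · have step1 : p (p (p (n b) (n a)) (p a b)) (p (n b) (n a))
        = p (p (n b) (p (p (n a) a) (p b (n b)))) (n a) := by simp only [hA]
    rw [step1, ← hcomm]
    have hNRZ : ∀ z, p (n b) (p b (p (n b) z)) = p (n b) z := fun z => by
      have h := congrArg (fun w => p w z) (hNR b); simpa only [hA] using h
    have hNR' : p (n a) (p a (n a)) = n a := by simpa only [hA] using hNR a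
    simp only [hA]
    rw [hNRZ, hNR']

lemma gen_central (hc : ∀ a, p a (n a) = p (n a) a) (e : T) (he : p e e = e)
    (a : T) : p e a = p a e := by
  have hne : n e = e := gen_nidem p n hA hR hNR hU e he
  have hnae : n (p a e) = p e (n a) := by
    rw [gen_nop p n hA hR hNR hU a e, hne]
  have hk : p (p (n a) a) (p (n a) a) = p (n a) a := gen_idem_nb p n hA hR hNR hU a
  have heZ : ∀ z, p e (p e z) = p e z := fun z => by rw [← hA, he]
  have hek : p e (p (n a) a) = p (p (n a) a) e :=
    gen_comm p n hA hR hNR hU e (p (n a) a) he hk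
  have hRZ : ∀ z, p a (p (n a) (p a z)) = p a z := fun z => by
    have h := congrArg (fun w => p w z) (hR a); simpa only [hA] using h
  have hka' : p (n a) (p a a) = a := by
    have h := hR a; rw [hc a] at h; simpa only [hA] using h
  have hcl := hc (p a e)
  rw [hnae] at hcl
  simp only [hA] at hcl
  rw [heZ] at hcl
  -- hcl : p a (p e (n a)) = p e (p (n a) (p a e))
  have hR1 : p e (p (n a) (p a e)) = p e (p (n a) a) := by
    calc p e (p (n a) (p a e)) = p (p e (p (n a) a)) e := by simp only [hA]
      _ = p (p (p (n a) a) e) e := by rw [hek]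
      _ = p (p (n a) a) (p e e) := by rw [hA]
      _ = p (p (n a) a) e := by rw [he]
      _ = p e (p (n a) a) := hek.symm
  rw [hR1] at hcl
  -- hcl : p a (p e (n a)) = p e (p (n a) a)
  have step := congrArg (fun w => p w a) hcl
  simp only [hA] at step
  rw [hka'] at step
  rw [hek] at step
  simp only [hA] at step
  rw [hRZ e] at step
  exact step.symm

end Generic




section AuxWB

open WeakBrace

variable {S : Type*} [DualWeakBrace S]

private lemma aA : ∀ a b c : S, add (add a b) c = add a (add b c) :=
  WeakBrace.add_assoc

private lemma mA : ∀ a b c : S, mul (mul a b) c = mul a (mul b c) :=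
  WeakBrace.mul_assoc

private lemma wb_neg_neg (a : S) : neg (neg a) = a :=
  gen_nn add neg aA add_reg neg_reg neg_unique a

private lemma wb_inv_inv (a : S) : inv (inv a) = a :=
  gen_nn mul inv mA mul_reg inv_reg inv_unique a

private lemma wb_neg_idem {e : S} (he : IsIdem e) : neg e = e :=
  gen_nidem add neg aA add_reg neg_reg neg_unique e he

private lemma wb_sq_idem (a : S) : IsIdem (sq a) :=
  gen_idem_bn add neg aA add_reg neg_reg neg_unique a

private lemma wb_f_idem (a : S) : IsIdem (add (neg a) a) :=
  gen_idem_nb add neg aA add_reg neg_reg neg_unique a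

private lemma wb_acomm {e f : S} (he : IsIdem e) (hf : IsIdem f) :
    add e f = add f e :=
  gen_comm add neg aA add_reg neg_reg neg_unique e f he hf

private lemma wb_neg_add (a b : S) : neg (add a b) = add (neg b) (neg a) :=
  gen_nop add neg aA add_reg neg_reg neg_unique a b

private lemma wb_inv_mul (a b : S) : inv (mul a b) = mul (inv b) (inv a) :=
  gen_nop mul inv mA mul_reg inv_reg inv_unique a b

-- Z-form distributivity helpers
private lemma wb_dZ (a b c z : S) :
    add (mul a b) (add (neg a) (add (mul a c) z)) = add (mul a (add b c)) z := by
  have h := congrArg (fun w => add w z) (distrib a b c).symm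
  simpa only [aA] using h

private lemma wb_d0 (a b c : S) :
    add (mul a b) (add (neg a) (mul a c)) = mul a (add b c) := by
  have h := (distrib a b c).symm
  simpa only [aA] using h

private lemma wb_nr0 (a : S) : add (neg a) (add a (neg a)) = neg a := by
  simpa only [aA] using neg_reg a

private lemma wb_neg_mul (a b : S) :
    neg (mul a b) = add (add (neg a) (mul a (neg b))) (neg a) := by
  refine (neg_unique (mul a b) _ ?_ ?_).symm
  · simp only [aA]
    rw [wb_dZ, wb_d0, add_reg]
  · simp only [aA]
    rw [wb_dZ a (neg b) b, wb_dZ a (add (neg b) b) (neg b), neg_reg]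

private lemma wb_sq_mul (a b : S) :
    sq (mul a b) = add (mul a (add b (neg b))) (neg a) := by
  show add (mul a b) (neg (mul a b)) = _
  rw [wb_neg_mul]
  simp only [aA]
  rw [wb_dZ]

private lemma wb_K1 (a b : S) : add (sq (mul a b)) (sq a) = sq (mul a b) := by
  rw [wb_sq_mul]
  show add (add (mul a (add b (neg b))) (neg a)) (add a (neg a)) = _
  simp only [aA]
  rw [wb_nr0]

private lemma wb_sq_add (a : S) : add (sq a) a = a := add_reg a

private lemma wb_P1 (a b : S) : add (sq a) (mul a b) = mul a b := by
  calc add (sq a) (mul a b)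
      = add (sq a) (add (sq (mul a b)) (mul a b)) := by rw [wb_sq_add]
    _ = add (add (sq a) (sq (mul a b))) (mul a b) := (aA _ _ _).symm
    _ = add (add (sq (mul a b)) (sq a)) (mul a b) := by
        rw [wb_acomm (wb_sq_idem a) (wb_sq_idem (mul a b))]
    _ = add (sq (mul a b)) (mul a b) := by rw [wb_K1]
    _ = mul a b := wb_sq_add _

private lemma wb_sq_eq_f (a : S) : sq a = add (neg a) a := by
  have hef : add (sq a) (add (neg a) a) = add (neg a) a := by
    have h := wb_P1 a (inv a); rwa [link] at h
  have hfe : add (add (neg a) a) (sq a) = sq a := by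
    have h := wb_P1 (neg a) (inv (neg a))
    rw [link (neg a), wb_neg_neg] at h
    have hs : sq (neg a) = add (neg a) a := by
      show add (neg a) (neg (neg a)) = add (neg a) a
      rw [wb_neg_neg]
    rw [hs] at h
    exact h
  calc sq a = add (add (neg a) a) (sq a) := hfe.symm
    _ = add (sq a) (add (neg a) a) := wb_acomm (wb_f_idem a) (wb_sq_idem a)
    _ = add (neg a) a := hef

private lemma wb_add_clifford (a : S) : add a (neg a) = add (neg a) a :=
  wb_sq_eq_f a

private lemma wb_acentral {e : S} (he : IsIdem e) (b : S) : add e b = add b e :=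
  gen_central add neg aA add_reg neg_reg neg_unique wb_add_clifford e he b

private lemma wb_aswap {e : S} (he : IsIdem e) (x z : S) :
    add e (add x z) = add x (add e z) := by
  rw [← aA, wb_acentral he x, aA]

private lemma wb_sqe {e : S} (he : IsIdem e) : sq e = e := by
  show add e (neg e) = e
  rw [wb_neg_idem he]; exact he

private lemma wb_P1e {e : S} (he : IsIdem e) (b : S) :
    add e (mul e b) = mul e b := by
  have h := wb_P1 e b
  rwa [wb_sqe he] at h

private lemma wb_mul_idem_inv {e : S} (he : IsIdem e) : mul e (inv e) = e := by
  rw [link, wb_neg_idem he]; exact he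

private lemma wb_idem_inv {e : S} (he : IsIdem e) : inv e = e := by
  have h1 : mul e (inv e) = e := wb_mul_idem_inv he
  have h2 : mul (inv e) e = e := by rw [← DualWeakBrace.clifford]; exact h1
  have h3 := inv_reg e
  rw [h2, h1] at h3
  exact h3.symm

private lemma wb_idem_mul {e : S} (he : IsIdem e) : mul e e = e := by
  have h1 : mul e (inv e) = e := wb_mul_idem_inv he
  calc mul e e = mul e (inv e) := by rw [wb_idem_inv he]
    _ = e := h1

private lemma wb_mcentral {e : S} (he : IsIdem e) (b : S) : mul e b = mul b e :=
  gen_central mul inv mA mul_reg inv_reg inv_unique DualWeakBrace.clifford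
    e (wb_idem_mul he) b

private lemma wb_mcommIdem {e f : S} (he : IsIdem e) (hf : IsIdem f) :
    mul e f = mul f e :=
  gen_comm mul inv mA mul_reg inv_reg inv_unique e f
    (wb_idem_mul he) (wb_idem_mul hf)

private lemma wb_neg_mul_idem {e : S} (he : IsIdem e) (b : S) :
    neg (mul e b) = mul e (neg b) := by
  rw [wb_neg_mul, wb_neg_idem he, aA, ← wb_acentral he (mul e (neg b)),
    wb_P1e he, wb_P1e he]

private lemma wb_d0e {e : S} (he : IsIdem e) (b c : S) :
    mul e (add b c) = add (mul e b) (mul e c) := by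
  rw [distrib, wb_neg_idem he, aA, wb_P1e he]

private lemma wb_add_idem_idem {e f : S} (he : IsIdem e) (hf : IsIdem f) :
    IsIdem (add e f) := by
  have he' : add e e = e := he
  have hf' : add f f = f := hf
  show add (add e f) (add e f) = add e f
  rw [aA, wb_aswap hf e f, hf', ← aA, he']

private lemma wb_mul_idem_idem {e f : S} (he : IsIdem e) (hf : IsIdem f) :
    mul e f = add e f := by
  have he' : add e e = e := he
  have hf' : add f f = f := hf
  have hme := wb_idem_mul he
  have hmf := wb_idem_mul hf
  have H : mul e f = add (add (mul e f) e) (mul e f) := by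
    have H := distrib e f f; rwa [hf', wb_neg_idem he] at H
  have hUidem : IsIdem (mul e f) := by
    show add (mul e f) (mul e f) = mul e f
    calc add (mul e f) (mul e f)
        = add (mul e f) (add e (mul e f)) := by rw [wb_P1e he]
      _ = add (add (mul e f) e) (mul e f) := (aA _ _ _).symm
      _ = mul e f := H.symm
  have hU' : add (mul e f) (mul e f) = mul e f := hUidem
  have hue : add (mul e f) e = mul e f := by
    rw [← wb_acentral he]; exact wb_P1e he f
  have hfu : add (mul e f) f = mul e f := by
    rw [← wb_acentral hf, wb_mcommIdem he hf, wb_P1e hf]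
  have hg : IsIdem (add e f) := wb_add_idem_idem he hf
  have hmg := wb_idem_mul hg
  have hge : mul e (add e f) = mul e f := by
    rw [wb_d0e he, hme, wb_P1e he]
  have hgf : mul f (add e f) = mul e f := by
    rw [wb_d0e hf, hmf, ← wb_mcommIdem he hf]
    exact hfu
  have hGU : add e f = add (add (mul e f) (add e f)) (mul e f) := by
    have H2 := distrib (add e f) e f
    rw [wb_neg_idem hg, hmg, ← wb_mcentral he (add e f), hge,
      ← wb_mcentral hf (add e f), hgf] at H2
    exact H2
  have hgu : add (add e f) (mul e f) = add e f := by
    have h3 : add e f = add (mul e f) (add (add e f) (mul e f)) := by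
      rw [← aA]; exact hGU
    have h4 : add (mul e f) (add (add e f) (mul e f)) = add (add e f) (mul e f) := by
      rw [wb_aswap hUidem, hU']
    rw [h4] at h3; exact h3.symm
  have hug : add (mul e f) (add e f) = mul e f := by
    rw [← aA, hue, hfu]
  calc mul e f = add (mul e f) (add e f) := hug.symm
    _ = add (add e f) (mul e f) := wb_acomm hUidem hg
    _ = add e f := hgu

private lemma wb_sq_mul_idem {e : S} (he : IsIdem e) (b : S) :
    sq (mul e b) = add e (sq b) := by
  show add (mul e b) (neg (mul e b)) = _
  rw [wb_neg_mul_idem he, ← wb_d0e he]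
  show mul e (sq b) = add e (sq b)
  exact wb_mul_idem_idem he (wb_sq_idem b)

private lemma wb_sq_inv (a : S) : sq (inv a) = add (neg a) a := by
  calc sq (inv a) = add (neg (inv a)) (inv a) := wb_sq_eq_f (inv a)
    _ = mul (inv a) (inv (inv a)) := (link (inv a)).symm
    _ = mul (inv a) a := by rw [wb_inv_inv]
    _ = mul a (inv a) := (DualWeakBrace.clifford a).symm
    _ = add (neg a) a := link a

private lemma wb_mul_any_idem {e : S} (he : IsIdem e) (a : S) :
    mul a e = add e a := by
  have he' : add e e = e := he
  have hfa : IsIdem (add (neg a) a) := wb_f_idem a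
  have hh : IsIdem (add e (add (neg a) a)) := wb_add_idem_idem he hfa
  have hsqm : sq (mul e (inv a)) = add e (add (neg a) a) := by
    rw [wb_sq_mul_idem he, wb_sq_inv]
  have hmm1 : mul (mul e (inv a)) (inv (mul e (inv a))) = add e (add (neg a) a) := by
    rw [link, ← wb_sq_eq_f, hsqm]
  have hxx : mul (add e a) (inv (add e a)) = add e (add (neg a) a) := by
    rw [link, wb_neg_add, wb_neg_idem he, aA]
    have hee : add e (add e a) = add e a := by rw [← aA, he']
    rw [hee, ← wb_aswap he]
  have ht : mul (mul e (inv a)) (add e a) = add e (add (neg a) a) := by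
    rw [mA, distrib (inv a) e a, wb_d0e he, wb_d0e he]
    have c1 : mul e (mul (inv a) e) = mul e (inv a) := by
      calc mul e (mul (inv a) e) = mul (mul e (inv a)) e := (mA _ _ _).symm
        _ = mul e (mul e (inv a)) := (wb_mcentral he _).symm
        _ = mul (mul e e) (inv a) := (mA _ _ _).symm
        _ = mul e (inv a) := by rw [wb_idem_mul he]
    have c2 : mul e (neg (inv a)) = neg (mul e (inv a)) := (wb_neg_mul_idem he _).symm
    have c3 : mul e (mul (inv a) a) = add e (add (neg a) a) := by
      rw [← DualWeakBrace.clifford, link]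
      exact wb_mul_idem_idem he hfa
    rw [c1, c2, c3,
      show add (mul e (inv a)) (neg (mul e (inv a))) = sq (mul e (inv a)) from rfl,
      hsqm]
    exact hh
  have hmxm : mul (mul (mul e (inv a)) (add e a)) (mul e (inv a)) = mul e (inv a) := by
    rw [ht, ← hmm1]
    exact mul_reg _
  have hxm : add e a = inv (mul e (inv a)) := by
    refine inv_unique (mul e (inv a)) (add e a) hmxm ?_
    calc mul (mul (add e a) (mul e (inv a))) (add e a)
        = mul (add e a) (mul (mul e (inv a)) (add e a)) := mA _ _ _
      _ = mul (add e a) (add e (add (neg a) a)) := by rw [ht]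
      _ = mul (add e (add (neg a) a)) (add e a) := (wb_mcentral hh _).symm
      _ = mul (mul (add e a) (inv (add e a))) (add e a) := by rw [hxx]
      _ = add e a := mul_reg _
  rw [hxm, wb_inv_mul, wb_inv_inv, wb_idem_inv he]

private lemma wb_mul_idem_any {e : S} (he : IsIdem e) (a : S) :
    mul e a = add e a := by
  rw [wb_mcentral he a]; exact wb_mul_any_idem he a

end AuxWB


section AnnWB

open WeakBrace

variable {S : Type*} [DualWeakBrace S]

private lemma wb_mem_ann {a : S} :
    a ∈ Ann S ↔ ∀ b : S, add a b = add b a ∧ add a b = mul a b ∧ mul a b = mul b a :=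
  Iff.rfl

private lemma wb_ann_idem {e : S} (he : IsIdem e) : e ∈ Ann S := by
  rw [wb_mem_ann]
  intro b
  exact ⟨wb_acentral he b, (wb_mul_idem_any he b).symm, wb_mcentral he b⟩

private lemma wb_ann_add {x y : S} (hx : x ∈ Ann S) (hy : y ∈ Ann S) :
    add x y ∈ Ann S := by
  rw [wb_mem_ann] at hx hy ⊢
  intro b
  have L : add (add x y) b = mul (add x y) b := by
    calc add (add x y) b = add x (add y b) := aA _ _ _
      _ = add x (mul y b) := by rw [(hy b).2.1]
      _ = mul x (mul y b) := (hx _).2.1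
      _ = mul (mul x y) b := (mA _ _ _).symm
      _ = mul (add x y) b := by rw [(hx y).2.1]
  have R : mul b (add x y) = add (add x y) b := by
    calc mul b (add x y) = add (add (mul b x) (neg b)) (mul b y) := distrib _ _ _
      _ = add (add (mul x b) (neg b)) (mul y b) := by
          rw [← (hx b).2.2, ← (hy b).2.2]
      _ = add (add (add x b) (neg b)) (add y b) := by
          rw [← (hx b).2.1, ← (hy b).2.1]
      _ = add x (add (add b (neg b)) (add y b)) := by simp only [aA]
      _ = add x (add (sq b) (add y b)) := rfl
      _ = add x (add y (add (sq b) b)) := by rw [wb_aswap (wb_sq_idem b)]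
      _ = add x (add y b) := by rw [wb_sq_add]
      _ = add (add x y) b := (aA _ _ _).symm
  refine ⟨?_, L, L.symm.trans R.symm⟩
  calc add (add x y) b = add x (add y b) := aA _ _ _
    _ = add x (add b y) := by rw [(hy b).1]
    _ = add (add x b) y := (aA _ _ _).symm
    _ = add (add b x) y := by rw [(hx b).1]
    _ = add b (add x y) := aA _ _ _

private lemma wb_ann_inv_eq_neg {x : S} (hx : x ∈ Ann S) : inv x = neg x := by
  rw [wb_mem_ann] at hx
  refine (inv_unique x (neg x) ?_ ?_).symm
  · have hxm : mul x (neg x) = add x (neg x) := ((hx (neg x)).2.1).symm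
    rw [hxm, show add x (neg x) = sq x from rfl,
      wb_mul_idem_any (wb_sq_idem x) x]
    exact wb_sq_add x
  · have h1 : mul (neg x) x = mul x (neg x) := ((hx (neg x)).2.2).symm
    rw [h1, ← (hx (neg x)).2.1, show add x (neg x) = sq x from rfl,
      wb_mul_idem_any (wb_sq_idem x) (neg x), wb_sq_eq_f]
    exact neg_reg x

private lemma wb_ann_inv_mul {x : S} (hx : x ∈ Ann S) (b : S) :
    mul (inv x) b = add (neg x) b := by
  have hx' := hx
  rw [wb_mem_ann] at hx'
  have key : add x (mul (inv x) b) = add (neg x) (add x b) := by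
    calc add x (mul (inv x) b) = mul x (mul (inv x) b) := (hx' _).2.1
      _ = mul (mul x (inv x)) b := (mA _ _ _).symm
      _ = mul (add (neg x) x) b := by rw [link]
      _ = add (add (neg x) x) b := wb_mul_idem_any (wb_f_idem x) b
      _ = add (neg x) (add x b) := aA _ _ _
  have step := congrArg (add (neg x)) key
  have L : add (neg x) (add x (mul (inv x) b)) = mul (inv x) b := by
    rw [← aA, show add (neg x) x = sq (inv x) from (wb_sq_inv x).symm]
    exact wb_P1 (inv x) b
  have hnf : add (neg x) (add (neg x) x) = neg x := by
    rw [← wb_acentral (wb_f_idem x) (neg x)]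
    exact neg_reg x
  have R : add (neg x) (add (neg x) (add x b)) = add (neg x) b := by
    rw [show add (neg x) (add x b) = add (add (neg x) x) b from (aA _ _ _).symm,
      ← aA, hnf]
  rw [L, R] at step
  exact step

private lemma wb_ann_neg {x : S} (hx : x ∈ Ann S) : neg x ∈ Ann S := by
  have hinv := wb_ann_inv_eq_neg hx
  have hx' := hx
  rw [wb_mem_ann] at hx'
  rw [wb_mem_ann]
  intro b
  have hcomm : add (neg x) b = add b (neg x) := by
    calc add (neg x) b = add (neg x) (neg (neg b)) := by rw [wb_neg_neg]
      _ = neg (add (neg b) x) := (wb_neg_add _ _).symm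
      _ = neg (add x (neg b)) := by rw [← (hx' (neg b)).1]
      _ = add (neg (neg b)) (neg x) := wb_neg_add _ _
      _ = add b (neg x) := by rw [wb_neg_neg]
  have hmul : mul (neg x) b = add (neg x) b := by
    calc mul (neg x) b = mul (inv x) b := by rw [hinv]
      _ = add (neg x) b := wb_ann_inv_mul hx b
  have hmcomm : mul (neg x) b = mul b (neg x) := by
    calc mul (neg x) b = mul (inv x) b := by rw [hinv]
      _ = mul (inv x) (inv (inv b)) := by rw [wb_inv_inv]
      _ = inv (mul (inv b) x) := (wb_inv_mul _ _).symm
      _ = inv (mul x (inv b)) := by rw [← (hx' (inv b)).2.2]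
      _ = mul (inv (inv b)) (inv x) := wb_inv_mul _ _
      _ = mul b (inv x) := by rw [wb_inv_inv]
      _ = mul b (neg x) := by rw [hinv]
  exact ⟨hcomm, hmul.symm, hmcomm⟩

end AnnWB

open WeakBrace
theorem stmt16 {S : Type*} [DualWeakBrace S] : IsIdeal (Ann S) := by
  have hidem : ∀ e : S, IsIdem e → e ∈ Ann S := fun e he => wb_ann_idem he
  have hadd : ∀ x ∈ Ann S, ∀ y ∈ Ann S, add x y ∈ Ann S :=
    fun x hx y hy => wb_ann_add hx hy
  have hneg : ∀ x ∈ Ann S, neg x ∈ Ann S := fun x hx => wb_ann_neg hx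
  refine ⟨⟨⟨hidem, hadd, hneg⟩, ?_⟩, ?_, hidem, ?_, ?_, ?_⟩
  · -- additive conjugation
    intro a x hx
    have hx' := hx
    rw [wb_mem_ann] at hx'
    have h : add (add (neg a) x) a = add x (add (neg a) a) := by
      rw [← (hx' (neg a)).1, aA]
    rw [h]
    exact hadd x hx _ (hidem _ (wb_f_idem a))
  · -- lambda invariance
    intro a x hx
    have hx' := hx
    rw [wb_mem_ann] at hx'
    have hax : mul a x = add a x := by
      rw [← (hx' a).2.2, ← (hx' a).2.1, (hx' a).1]
    have h : lam a x = add (add (neg a) a) x := by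
      show add (neg a) (mul a x) = _
      rw [hax, ← aA]
    rw [h]
    exact hadd _ (hidem _ (wb_f_idem a)) x hx
  · -- multiplicative closure
    intro x hx y hy
    have hx' := hx
    rw [wb_mem_ann] at hx'
    rw [show mul x y = add x y from ((hx' y).2.1).symm]
    exact hadd x hx y hy
  · -- inverse closure
    intro x hx
    rw [wb_ann_inv_eq_neg hx]
    exact hneg x hx
  · -- multiplicative conjugation
    intro a x hx
    have hx' := hx
    rw [wb_mem_ann] at hx'
    have h : mul (mul (inv a) x) a = mul (add (neg a) a) x := by
      calc mul (mul (inv a) x) a = mul (inv a) (mul x a) := mA _ _ _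
        _ = mul (inv a) (mul a x) := by rw [(hx' a).2.2]
        _ = mul (mul (inv a) a) x := (mA _ _ _).symm
        _ = mul (add (neg a) a) x := by rw [← DualWeakBrace.clifford, link]
    rw [h, wb_mul_idem_any (wb_f_idem a) x]
    exact hadd _ (hidem _ (wb_f_idem a)) x hx
end

section
/- In a dual weak brace S, the annihilator Ann(S) equals {a ∈ S : a · b = b · a = [a,b]₊ = a⁰ + b⁰ for all b ∈ S}, where a · b = -a + a ∘ b - b, [a,b]₊ = -a - b + a + b, and a⁰ = a - a. -/
namespace WBAux

structure IsInv {S : Type*} (op : S → S → S) (iv : S → S) : Prop where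
  assoc : ∀ a b c : S, op (op a b) c = op a (op b c)
  reg : ∀ a : S, op (op a (iv a)) a = a
  ivreg : ∀ a : S, op (op (iv a) a) (iv a) = iv a
  uniq : ∀ a x : S, op (op a x) a = a → op (op x a) x = x → x = iv a

namespace IsInv

variable {S : Type*} {op : S → S → S} {iv : S → S} (h : IsInv op iv)
include h

lemma iv_iv (a : S) : iv (iv a) = a := (h.uniq (iv a) a (h.ivreg a) (h.reg a)).symm

lemma nreg (a : S) : op a (op (iv a) a) = a := by rw [← h.assoc]; exact h.reg a

lemma nivreg (a : S) : op (iv a) (op a (iv a)) = iv a := by rw [← h.assoc]; exact h.ivreg a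

lemma regp (a z : S) : op a (op (iv a) (op a z)) = op a z := by
  rw [← h.assoc, ← h.assoc, h.reg]

lemma ivregp (a z : S) : op (iv a) (op a (op (iv a) z)) = op (iv a) z := by
  rw [← h.assoc, ← h.assoc, h.ivreg]

lemma idemp {e : S} (he : op e e = e) (z : S) : op e (op e z) = op e z := by
  rw [← h.assoc, he]

lemma idem_mul_iv (a : S) : op (op a (iv a)) (op a (iv a)) = op a (iv a) := by
  rw [← h.assoc (op a (iv a)) a (iv a), h.reg]

lemma idem_iv_mul (a : S) : op (op (iv a) a) (op (iv a) a) = op (iv a) a := by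
  rw [← h.assoc (op (iv a) a) (iv a) a, h.ivreg]

lemma iv_of_idem {e : S} (he : op e e = e) : iv e = e :=
  (h.uniq e e (by rw [he, he]) (by rw [he, he])).symm

lemma idem_mul {e f : S} (he : op e e = e) (hf : op f f = f) :
    op (op e f) (op e f) = op e f := by
  set x := iv (op e f) with hx
  have P : op e (op f (op x (op e f))) = op e f := by
    have t := h.reg (op e f); rw [← hx] at t; simpa only [h.assoc] using t
  have Q : op (op x (op e f)) x = x := by
    have t := h.ivreg (op e f); rw [← hx] at t; exact t
  have Qz : ∀ z, op x (op e (op f (op x z))) = op x z := by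
    intro z
    have t := congrArg (fun w => op w z) Q
    simpa only [h.assoc] using t
  have cond1 : op (op (op e f) (op (op f x) e)) (op e f) = op e f := by
    simp only [h.assoc]
    rw [h.idemp hf, h.idemp he]
    exact P
  have cond2 : op (op (op (op f x) e) (op e f)) (op (op f x) e) = op (op f x) e := by
    simp only [h.assoc]
    rw [h.idemp he, h.idemp hf, Qz e]
  have hy : op (op f x) e = x :=
    (h.uniq (op e f) (op (op f x) e) cond1 cond2).trans hx.symm
  have hyidem : op (op (op f x) e) (op (op f x) e) = op (op f x) e := by
    simp only [h.assoc]
    rw [Qz e]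
  have hxidem : op x x = x := by rw [← hy]; exact hyidem
  have hefx : op e f = iv x := by
    refine h.uniq x (op e f) Q ?_
    have t := h.reg (op e f); rw [← hx] at t; exact t
  rw [h.iv_of_idem hxidem] at hefx
  rw [hefx]; exact hxidem

lemma idem_comm {e f : S} (he : op e e = e) (hf : op f f = f) : op e f = op f e := by
  have hef := h.idem_mul he hf
  have hfe := h.idem_mul hf he
  have cond1 : op (op (op e f) (op f e)) (op e f) = op e f := by
    simp only [h.assoc]
    rw [h.idemp hf, h.idemp he]
    simpa only [h.assoc] using hef
  have cond2 : op (op (op f e) (op e f)) (op f e) = op f e := by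
    simp only [h.assoc]
    rw [h.idemp he, h.idemp hf]
    simpa only [h.assoc] using hfe
  have t := h.uniq (op e f) (op f e) cond1 cond2
  rw [h.iv_of_idem hef] at t
  exact t.symm

lemma iv_op (a b : S) : iv (op a b) = op (iv b) (iv a) := by
  have hc := h.idem_comm (h.idem_mul_iv b) (h.idem_iv_mul a)
  have hc1 : ∀ z, op b (op (iv b) (op (iv a) (op a z))) = op (iv a) (op a (op b (op (iv b) z))) := by
    intro z; have t := congrArg (fun w => op w z) hc; simpa only [h.assoc] using t
  have cond1 : op (op (op a b) (op (iv b) (iv a))) (op a b) = op a b := by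
    simp only [h.assoc]
    rw [hc1 b, h.nreg b, h.regp a b]
  have cond2 : op (op (op (iv b) (iv a)) (op a b)) (op (iv b) (iv a)) = op (iv b) (iv a) := by
    simp only [h.assoc]
    rw [← hc1 (iv a), h.ivregp b (op (iv a) (op a (iv a))), h.nivreg a]
  exact (h.uniq (op a b) (op (iv b) (iv a)) cond1 cond2).symm

lemma central_iv {a : S} (hc : ∀ x, op a x = op x a) (x : S) : op (iv a) x = op x (iv a) := by
  have t : iv (op (iv x) a) = iv (op a (iv x)) := by rw [hc (iv x)]
  rw [h.iv_op, h.iv_op, h.iv_iv] at t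
  exact t

lemma clifford_central (hcl : ∀ a : S, op a (iv a) = op (iv a) a)
    {e : S} (he : op e e = e) (a : S) : op e a = op a e := by
  have hive : iv e = e := h.iv_of_idem he
  have hcomm1 : op e (op a (iv a)) = op (op a (iv a)) e := h.idem_comm he (h.idem_mul_iv a)
  have s1 : op e (op a (op (iv a) e)) = op (iv a) (op e a) := by
    have t := hcl (op e a)
    rw [h.iv_op, hive] at t
    simp only [h.assoc] at t
    rw [h.idemp he] at t
    exact t
  have c1 : op (iv a) (op a e) = op (iv a) (op e a) := by
    have c0 : op (op a (iv a)) e = op (iv a) (op e a) := by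
      calc op (op a (iv a)) e = op (op a (iv a)) (op e e) := by rw [he]
        _ = op (op (op a (iv a)) e) e := by rw [← h.assoc]
        _ = op (op e (op a (iv a))) e := by rw [hcomm1]
        _ = op e (op a (op (iv a) e)) := by simp only [h.assoc]
        _ = op (iv a) (op e a) := s1
    have c0' : op (op (iv a) a) e = op (iv a) (op e a) := by rw [← hcl a]; exact c0
    rw [h.assoc] at c0'
    exact c0'
  have hcomm1' : ∀ z, op e (op a (op (iv a) z)) = op a (op (iv a) (op e z)) := by
    intro z; have t := congrArg (fun w => op w z) hcomm1; simpa only [h.assoc] using t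
  calc op e a = op e (op a (op (iv a) a)) := by rw [h.nreg a]
    _ = op a (op (iv a) (op e a)) := hcomm1' a
    _ = op a (op (iv a) (op a e)) := by rw [← c1]
    _ = op a e := h.regp a e

end IsInv
end WBAux
section WBDev
namespace WBAux

variable {S : Type*} [DualWeakBrace S]

lemma hA : IsInv (WeakBrace.add (S := S)) WeakBrace.neg :=
  ⟨WeakBrace.add_assoc, WeakBrace.add_reg, WeakBrace.neg_reg, WeakBrace.neg_unique⟩

lemma hM : IsInv (WeakBrace.mul (S := S)) WeakBrace.inv :=
  ⟨WeakBrace.mul_assoc, WeakBrace.mul_reg, WeakBrace.inv_reg, WeakBrace.inv_unique⟩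

open WeakBrace in
lemma lam_add (c u v : S) : add (neg c) (mul c (add u v))
    = add (add (neg c) (mul c u)) (add (neg c) (mul c v)) := by
  rw [WeakBrace.distrib]; simp only [WeakBrace.add_assoc]

open WeakBrace in
lemma lam_neg (a b : S) : add (neg a) (mul a (neg b)) = add (neg (mul a b)) a := by
  have k1 : add (mul a b) (add (neg a) (add (mul a (neg b)) (add (neg a) (mul a b)))) = mul a b := by
    conv_rhs => rw [show b = add (add b (neg b)) b from (WeakBrace.add_reg b).symm]
    rw [WeakBrace.distrib, WeakBrace.distrib]
    simp only [WeakBrace.add_assoc]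
  have k2 : add (mul a (neg b)) (add (neg a) (add (mul a b) (add (neg a) (mul a (neg b))))) = mul a (neg b) := by
    conv_rhs => rw [show neg b = add (add (neg b) b) (neg b) from (WeakBrace.neg_reg b).symm]
    rw [WeakBrace.distrib, WeakBrace.distrib]
    simp only [WeakBrace.add_assoc]
  have cond1 : add (add (add (neg a) (mul a b)) (add (neg a) (mul a (neg b)))) (add (neg a) (mul a b)) = add (neg a) (mul a b) := by
    simp only [WeakBrace.add_assoc]
    rw [k1]
  have cond2 : add (add (add (neg a) (mul a (neg b))) (add (neg a) (mul a b))) (add (neg a) (mul a (neg b))) = add (neg a) (mul a (neg b)) := by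
    simp only [WeakBrace.add_assoc]
    rw [k2]
  have t := hA.uniq (add (neg a) (mul a b)) (add (neg a) (mul a (neg b))) cond1 cond2
  rw [hA.iv_op, hA.iv_iv] at t
  exact t

open WeakBrace in
lemma mul_e (a : S) : mul a (mul a (inv a)) = a := by
  rw [DualWeakBrace.clifford, ← WeakBrace.mul_assoc, WeakBrace.mul_reg]

open WeakBrace in
lemma inv_mul_e (a : S) : mul (inv a) (mul a (inv a)) = inv a := hM.nivreg a

open WeakBrace in
lemma neg_inv_add (a : S) : add (neg (inv a)) (inv a) = add (neg a) a := by
  have t := WeakBrace.link (inv a)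
  rw [hM.iv_iv, ← DualWeakBrace.clifford, WeakBrace.link] at t
  exact t.symm

open WeakBrace in
lemma inv_mul_self (a : S) : mul (inv a) a = add (neg a) a := by
  rw [← DualWeakBrace.clifford, WeakBrace.link]

open WeakBrace in
lemma eF (a : S) : add (add (neg a) a) (add (inv a) (neg (inv a))) = add (neg a) a := by
  have E1' : add (neg (inv a)) (mul (inv a) (add (neg a) a)) = add (neg a) a := by
    have E1 : add (neg (inv a)) (mul (inv a) (mul a (inv a))) = add (neg a) a := by
      rw [inv_mul_e a]; exact neg_inv_add a
    rw [WeakBrace.link a] at E1; exact E1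
  have E2 := lam_add (inv a) (neg a) a
  have E3 : add (neg (inv a)) (mul (inv a) (neg a)) = add (add (neg a) a) (inv a) := by
    rw [lam_neg (inv a) a, inv_mul_self a, hA.iv_op, hA.iv_iv]
  have E4 : add (neg (inv a)) (mul (inv a) a) = add (neg (inv a)) (add (neg a) a) := by
    rw [inv_mul_self a]
  have key : add (add (add (neg a) a) (inv a)) (add (neg (inv a)) (add (neg a) a)) = add (neg a) a := by
    rw [← E3, ← E4, ← E2]; exact E1'
  have he : add (add (neg a) a) (add (neg a) a) = add (neg a) a := hA.idem_iv_mul a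
  have hF : add (add (inv a) (neg (inv a))) (add (inv a) (neg (inv a))) = add (inv a) (neg (inv a)) := hA.idem_mul_iv (inv a)
  have hcomm := hA.idem_comm he hF
  calc add (add (neg a) a) (add (inv a) (neg (inv a)))
      = add (add (inv a) (neg (inv a))) (add (neg a) a) := hcomm
    _ = add (add (inv a) (neg (inv a))) (add (add (neg a) a) (add (neg a) a)) := by rw [he]
    _ = add (add (add (inv a) (neg (inv a))) (add (neg a) a)) (add (neg a) a) := by rw [← WeakBrace.add_assoc]
    _ = add (add (add (neg a) a) (add (inv a) (neg (inv a)))) (add (neg a) a) := by rw [← hcomm]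
    _ = add (neg a) a := by
        have k := key
        simp only [WeakBrace.add_assoc] at k ⊢
        exact k

open WeakBrace in
lemma e_add_f (a : S) : add (add (neg a) a) (add a (neg a)) = add (neg a) a := by
  have t := eF (inv a)
  rw [hM.iv_iv, neg_inv_add] at t
  exact t

open WeakBrace in
lemma f_add_e (a : S) : add (add a (neg a)) (add (neg a) a) = add a (neg a) := by
  have t := e_add_f (neg a)
  rw [hA.iv_iv] at t
  exact t

open WeakBrace in
lemma add_neg_comm (a : S) : add a (neg a) = add (neg a) a := by
  have h1 := e_add_f a
  have h2 := f_add_e a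
  have h3 := hA.idem_comm (hA.idem_mul_iv a) (hA.idem_iv_mul a)
  rw [h2, h1] at h3
  exact h3

open WeakBrace in
lemma sq_def (a : S) : sq a = add a (neg a) := rfl

open WeakBrace in
lemma sq_eq (a : S) : sq a = add (neg a) a := add_neg_comm a

open WeakBrace in
lemma sq_eq_mul (a : S) : sq a = mul a (inv a) := by rw [sq_eq, WeakBrace.link]

open WeakBrace in
lemma sq_idem (a : S) : add (sq a) (sq a) = sq a := by
  rw [sq_eq]; exact hA.idem_iv_mul a

open WeakBrace in
lemma sq_neg (a : S) : neg (sq a) = sq a := hA.iv_of_idem (sq_idem a)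

open WeakBrace in
lemma sq_add_self (a : S) : add (sq a) a = a := by
  rw [sq_def]; exact WeakBrace.add_reg a

open WeakBrace in
lemma add_sq_self (a : S) : add a (sq a) = a := by
  rw [sq_eq, ← WeakBrace.add_assoc]; exact WeakBrace.add_reg a

open WeakBrace in
lemma addIdem_central {u : S} (hu : add u u = u) (x : S) : add u x = add x u :=
  hA.clifford_central add_neg_comm hu x

open WeakBrace in
lemma sq_add_comm (a x : S) : add (sq a) x = add x (sq a) :=
  addIdem_central (sq_idem a) x

open WeakBrace in
lemma addIdem_mulIdem {u : S} (hu : add u u = u) : mul u u = u := by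
  have hnu : neg u = u := hA.iv_of_idem hu
  have hl : mul u (inv u) = u := by rw [WeakBrace.link, hnu]; exact hu
  have t := WeakBrace.mul_reg u
  rw [hl] at t
  exact t

open WeakBrace in
lemma mulIdem_addIdem {u : S} (hu : mul u u = u) : add u u = u := by
  have hiu : inv u = u := hM.iv_of_idem hu
  have h1 : add (neg u) u = u := by rw [← WeakBrace.link, hiu]; exact hu
  rw [← h1]; exact hA.idem_iv_mul u

open WeakBrace in
lemma mulIdem_central {u : S} (hu : mul u u = u) (x : S) : mul u x = mul x u :=
  hM.clifford_central DualWeakBrace.clifford hu x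

open WeakBrace in
lemma sq_mul_idem (a : S) : mul (sq a) (sq a) = sq a := addIdem_mulIdem (sq_idem a)

open WeakBrace in
lemma addIdem_add_eq_mul {u v : S} (hu : add u u = u) (hv : add v v = v) :
    add u v = mul u v := by
  have hnu := hA.iv_of_idem hu
  have hnv := hA.iv_of_idem hv
  have hmu := addIdem_mulIdem hu
  have hmv := addIdem_mulIdem hv
  have hvu : mul v u = mul u v := mulIdem_central hmv u
  have hxm : mul (mul u v) (mul u v) = mul u v := by
    calc mul (mul u v) (mul u v) = mul u (mul (mul v u) v) := by simp only [WeakBrace.mul_assoc]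
      _ = mul u (mul (mul u v) v) := by rw [hvu]
      _ = mul (mul u u) (mul v v) := by simp only [WeakBrace.mul_assoc]
      _ = mul u v := by rw [hmu, hmv]
  have hxa : add (mul u v) (mul u v) = mul u v := mulIdem_addIdem hxm
  have huc : ∀ z : S, add u z = add z u := addIdem_central hu
  have hvc : ∀ z : S, add v z = add z v := addIdem_central hv
  have P1 : add (mul u v) u = mul u v := by
    have t := WeakBrace.distrib u v v
    rw [hv, hnu] at t
    have t2 : add (add (mul u v) u) (mul u v) = add (mul u v) u := by
      rw [WeakBrace.add_assoc, huc (mul u v), ← WeakBrace.add_assoc, hxa]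
    rw [t2] at t
    exact t.symm
  have P2 : add (mul u v) v = mul u v := by
    have t := WeakBrace.distrib v u u
    rw [hu, hnv, hvu] at t
    have t2 : add (add (mul u v) v) (mul u v) = add (mul u v) v := by
      rw [WeakBrace.add_assoc, hvc (mul u v), ← WeakBrace.add_assoc, hxa]
    rw [t2] at t
    exact t.symm
  have P3 : add (mul u v) (add u v) = mul u v := by
    rw [← WeakBrace.add_assoc, P1, P2]
  have hw : add (add u v) (add u v) = add u v := by
    calc add (add u v) (add u v) = add u (add (add v u) v) := by simp only [WeakBrace.add_assoc]
      _ = add u (add (add u v) v) := by rw [hvc u]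
      _ = add (add u u) (add v v) := by simp only [WeakBrace.add_assoc]
      _ = add u v := by rw [hu, hv]
  have hwm := addIdem_mulIdem hw
  have hwn := hA.iv_of_idem hw
  have uw : mul u (add u v) = mul u v := by
    have t := WeakBrace.distrib u u v
    rw [hnu, hmu, hu, huc (mul u v), P1] at t
    exact t
  have vw : mul v (add u v) = mul u v := by
    have t := WeakBrace.distrib v u v
    rw [hnv, hmv, hvu, WeakBrace.add_assoc, hv, P2] at t
    exact t
  have P4 : add (mul u v) (add u v) = add u v := by
    have t2 := WeakBrace.distrib (add u v) u v
    rw [hwn] at t2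
    have e1 : mul (add u v) u = mul u v := by
      rw [mulIdem_central hwm u]; exact uw
    have e2 : mul (add u v) v = mul u v := by
      rw [mulIdem_central hwm v]; exact vw
    rw [e1, e2, hwm, WeakBrace.add_assoc, addIdem_central hw (mul u v),
      ← WeakBrace.add_assoc, hxa] at t2
    exact t2.symm
  exact P4.symm.trans P3

open WeakBrace in
lemma sq_mul (a b : S) : sq (mul a b) = mul (sq a) (sq b) := by
  simp only [sq_eq_mul]
  rw [hM.iv_op]
  have hc : mul (mul b (inv b)) (inv a) = mul (inv a) (mul b (inv b)) :=
    mulIdem_central (hM.idem_mul_iv b) (inv a)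
  calc mul (mul a b) (mul (inv b) (inv a))
      = mul a (mul (mul b (inv b)) (inv a)) := by simp only [WeakBrace.mul_assoc]
    _ = mul a (mul (inv a) (mul b (inv b))) := by rw [hc]
    _ = mul (mul a (inv a)) (mul b (inv b)) := by rw [← WeakBrace.mul_assoc]

open WeakBrace in
lemma sq_add_mul (a b : S) : add (sq a) (mul a b) = mul a b := by
  have h1 : add (sq a) (sq (mul a b)) = sq (mul a b) := by
    rw [addIdem_add_eq_mul (sq_idem a) (sq_idem (mul a b)), sq_mul,
      ← WeakBrace.mul_assoc, sq_mul_idem]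
  calc add (sq a) (mul a b) = add (sq a) (add (sq (mul a b)) (mul a b)) := by rw [sq_add_self]
    _ = add (add (sq a) (sq (mul a b))) (mul a b) := by rw [WeakBrace.add_assoc]
    _ = add (sq (mul a b)) (mul a b) := by rw [h1]
    _ = mul a b := sq_add_self (mul a b)

open WeakBrace in
lemma mul_add_sq (a b : S) : add (mul a b) (sq b) = mul a b := by
  have h1 : add (sq b) (sq (mul a b)) = sq (mul a b) := by
    rw [addIdem_add_eq_mul (sq_idem b) (sq_idem (mul a b)), sq_mul,
      ← WeakBrace.mul_assoc, mulIdem_central (sq_mul_idem b) (sq a),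
      WeakBrace.mul_assoc, sq_mul_idem]
  calc add (mul a b) (sq b) = add (sq b) (mul a b) := (sq_add_comm b (mul a b)).symm
    _ = add (sq b) (add (sq (mul a b)) (mul a b)) := by rw [sq_add_self]
    _ = add (add (sq b) (sq (mul a b))) (mul a b) := by rw [WeakBrace.add_assoc]
    _ = add (sq (mul a b)) (mul a b) := by rw [h1]
    _ = mul a b := sq_add_self (mul a b)

open WeakBrace in
lemma sq_mid (a x y : S) : add x (add (sq a) y) = add (sq a) (add x y) := by
  rw [← WeakBrace.add_assoc, ← sq_add_comm a x, WeakBrace.add_assoc]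

end WBAux
end WBDev

open WeakBrace
theorem stmt17 {S : Type*} [DualWeakBrace S] :
    Ann S = {a : S | ∀ b : S, cdot a b = add (sq a) (sq b) ∧
      cdot b a = add (sq a) (sq b) ∧ brkt a b = add (sq a) (sq b)} := by
  ext a
  simp only [WeakBrace.Ann, Set.mem_setOf_eq]
  constructor
  · intro ha b
    have hc : ∀ x : S, add a x = add x a := fun x => (ha x).1
    have hnc : ∀ x : S, add (neg a) x = add x (neg a) := fun x => WBAux.hA.central_iv hc x
    have hab : add a b = mul a b := (ha b).2.1
    have hba : mul a b = mul b a := (ha b).2.2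
    refine ⟨?_, ?_, ?_⟩
    · show add (add (neg a) (mul a b)) (neg b) = add (sq a) (sq b)
      rw [← hab]
      calc add (add (neg a) (add a b)) (neg b)
          = add (add (add (neg a) a) b) (neg b) := by rw [← WeakBrace.add_assoc]
        _ = add (add (neg a) a) (add b (neg b)) := by rw [WeakBrace.add_assoc]
        _ = add (sq a) (sq b) := by rw [← WBAux.sq_eq, ← WBAux.sq_def]
    · show add (add (neg b) (mul b a)) (neg a) = add (sq a) (sq b)
      have hba' : mul b a = add a b := by rw [← hba, ← hab]
      rw [hba']
      calc add (add (neg b) (add a b)) (neg a)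
          = add (add (add (neg b) a) b) (neg a) := by rw [← WeakBrace.add_assoc]
        _ = add (add (add a (neg b)) b) (neg a) := by rw [← hc (neg b)]
        _ = add (add a (add (neg b) b)) (neg a) := by rw [WeakBrace.add_assoc a (neg b) b]
        _ = add (add a (sq b)) (neg a) := by rw [← WBAux.sq_eq]
        _ = add (add (sq b) a) (neg a) := by rw [← WBAux.sq_add_comm b a]
        _ = add (sq b) (add a (neg a)) := by rw [WeakBrace.add_assoc]
        _ = add (sq b) (sq a) := by rw [← WBAux.sq_def]
        _ = add (sq a) (sq b) := WBAux.sq_add_comm b (sq a)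
    · show add (add (add (neg a) (neg b)) a) b = add (sq a) (sq b)
      simp only [WeakBrace.add_assoc]
      have m1 : add (neg b) (add a b) = add a (add (neg b) b) := by
        rw [← WeakBrace.add_assoc, ← hc (neg b), WeakBrace.add_assoc]
      rw [m1, ← WeakBrace.add_assoc, ← WBAux.sq_eq, ← WBAux.sq_eq]
  · intro hmem b
    obtain ⟨H1, H2, H3⟩ := hmem b
    have R1 : add a b = mul a b := by
      have hU1 : add (add a (WeakBrace.cdot a b)) b = mul a b := by
        show add (add a (add (add (neg a) (mul a b)) (neg b))) b = mul a b
        simp only [WeakBrace.add_assoc]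
        rw [← WBAux.sq_eq b, WBAux.mul_add_sq a b, ← WeakBrace.add_assoc,
          ← WBAux.sq_def a, WBAux.sq_add_mul a b]
      have hU2 : add (add a (WeakBrace.cdot a b)) b = add a b := by
        rw [H1]
        simp only [WeakBrace.add_assoc]
        rw [WBAux.sq_add_self b, ← WeakBrace.add_assoc, WBAux.add_sq_self a]
      exact hU2.symm.trans hU1
    have R2 : mul b a = add b a := by
      have hV1 : add (add b (WeakBrace.cdot b a)) a = mul b a := by
        show add (add b (add (add (neg b) (mul b a)) (neg a))) a = mul b a
        simp only [WeakBrace.add_assoc]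
        rw [← WBAux.sq_eq a, WBAux.mul_add_sq b a, ← WeakBrace.add_assoc,
          ← WBAux.sq_def b, WBAux.sq_add_mul b a]
      have hV2 : add (add b (WeakBrace.cdot b a)) a = add b a := by
        rw [H2]
        simp only [WeakBrace.add_assoc]
        have m2 : add (sq a) (add (sq b) a) = add (sq b) a := by
          rw [← WeakBrace.add_assoc, WBAux.sq_add_comm a (sq b), WeakBrace.add_assoc,
            WBAux.sq_add_self a]
        rw [m2, ← WeakBrace.add_assoc, WBAux.add_sq_self b]
      exact hV1.symm.trans hV2
    have R3 : add a b = add b a := by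
      have hT1 : add (add b a) (WeakBrace.brkt a b) = add a b := by
        show add (add b a) (add (add (add (neg a) (neg b)) a) b) = add a b
        simp only [WeakBrace.add_assoc]
        rw [← WeakBrace.add_assoc a (neg a), ← WBAux.sq_def a, WBAux.sq_mid a b,
          ← WeakBrace.add_assoc b (neg b), ← WBAux.sq_def b]
        rw [← WBAux.sq_mid b a b, WBAux.sq_add_self b, ← WeakBrace.add_assoc,
          WBAux.sq_add_self a]
      have hT2 : add (add b a) (WeakBrace.brkt a b) = add b a := by
        rw [H3]
        simp only [WeakBrace.add_assoc]
        rw [← WeakBrace.add_assoc a (sq a), WBAux.add_sq_self a, ← WBAux.sq_add_comm b a,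
          ← WeakBrace.add_assoc, WBAux.add_sq_self b]
      exact hT1.symm.trans hT2
    exact ⟨R3, R1, by rw [← R1, R3, ← R2]⟩
end
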